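/- arXiv:2202.13809 — 10 statements merged into one kernel-verified Lean document; each statement's English description precedes it below -/
import Mathlib

section
/- Let F be a cellular automaton on alphabet A that is left expansive with dimensions (h,d,w). If x in A^Z and i in Z are such that the trace of x over the interval [i, i+w-1] (i.e., the sequence t ↦ F^t(x)[i..i+w-1]) is eventually p-periodic with preperiod c, then the trace of x over the interval [i-1, i+w-2] is eventually p-periodic with preperiod c+h. -/
/-- `F` is a cellular automaton: it is given by some `(m,n)` local rule. -/
def IsCA {A : Type*} (F : (ℤ → A) → ℤ → A) : Prop :=
  ∃ (m n : ℕ) (f : (Fin (m + n + 1) → A) → A),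
    ∀ x i, F x i = f fun k => x (i - (m : ℤ) + (k.val : ℤ))

/-- `F` is left expansive with dimensions `(h, d, w)`: the contents of a translated
rectangle (spatial offsets `0,...,w-1`, time iterates `t - b` for `-d ≤ b ≤ h`) in any two
space-time diagrams determine the symbol immediately to the left of the rectangle
(at time iterate `t`). -/
def LeftExpansive {A : Type*} (F : (ℤ → A) → ℤ → A) (h d w : ℕ) : Prop :=
  ∀ (x₁ x₂ : ℤ → A) (i₁ i₂ : ℤ) (t₁ t₂ : ℕ), h ≤ t₁ → h ≤ t₂ →
    (∀ (a : ℕ) (b : ℤ), a < w → -(d : ℤ) ≤ b → b ≤ (h : ℤ) →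
      F^[((t₁ : ℤ) - b).toNat] x₁ (i₁ + (a : ℤ)) = F^[((t₂ : ℤ) - b).toNat] x₂ (i₂ + (a : ℤ))) →
    F^[t₁] x₁ (i₁ - 1) = F^[t₂] x₂ (i₂ - 1)

/-- A one-sided sequence is eventually `p`-periodic for some `p ≥ 1`. -/
def EvPeriodicSeq {B : Type*} (y : ℕ → B) : Prop :=
  ∃ p : ℕ, 1 ≤ p ∧ ∃ c : ℕ, ∀ t, c ≤ t → y (t + p) = y t

/-- If `F` is a left expansive CA with dimensions `(h,d,w)` and the trace of `x` over
`[i, i+w-1]` is eventually `p`-periodic with preperiod `c`, then the trace of `x` over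
`[i-1, i+w-2]` is eventually `p`-periodic with preperiod `c + h`. -/
theorem stmt_0 {A : Type*} (F : (ℤ → A) → ℤ → A) (hF : IsCA F)
    (h d w : ℕ) (hw : 1 ≤ w) (hexp : LeftExpansive F h d w)
    (x : ℤ → A) (i : ℤ) (p c : ℕ) (hp : 1 ≤ p)
    (hper : ∀ t, c ≤ t → ∀ k : Fin w,
      F^[t + p] x (i + (k.val : ℤ)) = F^[t] x (i + (k.val : ℤ))) :
    ∀ t, c + h ≤ t → ∀ k : Fin w,
      F^[t + p] x ((i - 1) + (k.val : ℤ)) = F^[t] x ((i - 1) + (k.val : ℤ)) := by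
  intro t ht k
  rcases Nat.eq_zero_or_pos k.val with hk | hk
  · have h2 : h ≤ t := le_trans (Nat.le_add_left h c) ht
    have h1 : h ≤ t + p := le_trans h2 (Nat.le_add_right t p)
    have key := hexp x x i i (t + p) t h1 h2 (by
      intro a b ha hb1 hb2
      have hbt : b ≤ (t : ℤ) := le_trans hb2 (by exact_mod_cast h2)
      have hs' : (((t + p : ℕ) : ℤ) - b).toNat = ((t : ℤ) - b).toNat + p := by omega
      rw [hs']
      have hc : c ≤ ((t : ℤ) - b).toNat := by omega
      exact hper _ hc ⟨a, ha⟩)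
    simpa [hk] using key
  · have hk1 : k.val - 1 < w := by omega
    have hres := hper t (le_trans (Nat.le_add_right c h) ht) ⟨k.val - 1, hk1⟩
    have hcast : (i - 1) + (k.val : ℤ) = i + ((k.val - 1 : ℕ) : ℤ) := by
      have : ((k.val - 1 : ℕ) : ℤ) = (k.val : ℤ) - 1 := by omega
      rw [this]; ring
    rw [hcast]; exact hres
end

section
/- If F: A^Z → A^Z is a rapidly left expansive cellular automaton with width w and x is a number-like configuration (x ≠ 0^Z and x[i] = 0 for all sufficiently small i), then for every i ∈ Z the trace of x over the interval [i, i+w-1] with respect to F is not eventually periodic. -/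
/-- A configuration is number-like: nonzero, and zero at all sufficiently small coordinates. -/
def NumberLike {A : Type*} [Zero A] (x : ℤ → A) : Prop :=
  (∃ i, x i ≠ 0) ∧ ∃ N : ℤ, ∀ i < N, x i = 0

/-- The left edge of a configuration: the least coordinate with a nonzero symbol. -/
noncomputable def lbound {A : Type*} [Zero A] (x : ℤ → A) : ℤ :=
  sInf {N : ℤ | x N ≠ 0}

/-- `F` is left spreading on number-like configurations. -/
def LeftSpreading {A : Type*} [Zero A] (F : (ℤ → A) → ℤ → A) : Prop :=
  F (fun _ => 0) = (fun _ => 0) ∧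
    ∀ x, NumberLike x → ∃ t : ℕ, 1 ≤ t ∧ lbound (F^[t] x) < lbound x

/-- The spreading speed of `F`:
`sup` over number-like `x` of `limsup_t (-lbound(F^t(x)))/t`. -/
noncomputable def spreadingSpeed {A : Type*} [Zero A] (F : (ℤ → A) → ℤ → A) : ℝ :=
  ⨆ x : {x : ℤ → A // NumberLike x},
    Filter.limsup (fun t : ℕ => -((lbound (F^[t] x.1) : ℝ)) / (t : ℝ)) Filter.atTop

/-- `F` is rapidly left expansive with width `w`: left expansive with dimensions `(h,d,w)`,
left spreading with spreading speed `s`, and `s < 1/h` (equivalently `s * h < 1`,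
which also covers the case `h = 0`). -/
def RapidlyLeftExpansive {A : Type*} [Zero A] (F : (ℤ → A) → ℤ → A) (w : ℕ) : Prop :=
  ∃ h d : ℕ, LeftExpansive F h d w ∧ LeftSpreading F ∧ spreadingSpeed F * (h : ℝ) < 1

set_option linter.unusedSectionVars false

section Aux

variable {A : Type*} [Zero A] {F : (ℤ → A) → ℤ → A} {m n : ℕ}
  {f : (Fin (m + n + 1) → A) → A}

/-- basic facts about `lbound` of a number-like configuration -/
lemma aux_lb_spec (y : ℤ → A) (hy : (∃ i, y i ≠ 0) ∧ ∃ N : ℤ, ∀ i < N, y i = 0) :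
    y (sInf {N : ℤ | y N ≠ 0}) ≠ 0 ∧ ∀ j < sInf {N : ℤ | y N ≠ 0}, y j = 0 := by
  obtain ⟨⟨j0, hj0⟩, N, hN⟩ := hy
  have hne : {N : ℤ | y N ≠ 0}.Nonempty := ⟨j0, hj0⟩
  have hbdd : BddBelow {N : ℤ | y N ≠ 0} :=
    ⟨N, fun j hj => le_of_not_gt fun hlt => hj (hN j hlt)⟩
  refine ⟨Int.csInf_mem hne hbdd, fun j hj => ?_⟩
  by_contra hne0
  exact absurd (csInf_le hbdd hne0) (not_le.mpr hj)

lemma aux_local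
    (hf : ∀ x i, F x i = f fun k => x (i - (m : ℤ) + (k.val : ℤ)))
    (hz : F (fun _ => 0) = fun _ => 0)
    (y : ℤ → A) (N : ℤ) (hy : ∀ j < N, y j = 0) :
    ∀ j < N - n, F y j = 0 := by
  intro j hj
  have harg : (fun k : Fin (m+n+1) => y (j - (m:ℤ) + (k.val:ℤ))) =
      fun k : Fin (m+n+1) => (fun _ : ℤ => (0:A)) (j - (m:ℤ) + (k.val:ℤ)) := by
    funext k
    have hk : (k.val : ℤ) ≤ (m:ℤ) + n := by exact_mod_cast Nat.lt_succ_iff.mp k.isLt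
    exact hy (j - (m:ℤ) + (k.val:ℤ)) (by omega)
  have h0 : F (fun _ => 0) j = 0 := by rw [hz]
  rw [hf] at h0 ⊢
  rw [harg]; exact h0

lemma aux_iter_zero (hz : F (fun _ => 0) = fun _ => 0) :
    ∀ s : ℕ, F^[s] (fun _ => (0:A)) = fun _ => 0 := by
  intro s
  induction s with
  | zero => rfl
  | succ s ih => rw [Function.iterate_succ_apply', ih, hz]

lemma aux_localIter
    (hf : ∀ x i, F x i = f fun k => x (i - (m : ℤ) + (k.val : ℤ)))
    (hz : F (fun _ => 0) = fun _ => 0)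
    (y : ℤ → A) (N : ℤ) (hy : ∀ j < N, y j = 0) :
    ∀ (t : ℕ) (j : ℤ), j < N - (n:ℤ) * t → F^[t] y j = 0 := by
  intro t
  induction t with
  | zero => intro j hj; simpa using hy j (by simpa using hj)
  | succ t ih =>
    intro j hj
    rw [Function.iterate_succ_apply']
    refine aux_local hf hz (F^[t] y) (N - (n:ℤ) * t) ih j ?_
    push_cast at hj ⊢
    linarith

lemma aux_shift1
    (hf : ∀ x i, F x i = f fun k => x (i - (m : ℤ) + (k.val : ℤ)))
    (y : ℤ → A) (c : ℤ) : F (fun j => y (j + c)) = fun j => F y (j + c) := by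
  funext j
  rw [hf, hf]
  congr 1
  funext k
  congr 1
  ring

lemma aux_shift
    (hf : ∀ x i, F x i = f fun k => x (i - (m : ℤ) + (k.val : ℤ)))
    (y : ℤ → A) (c : ℤ) (s : ℕ) :
    F^[s] (fun j => y (j + c)) = fun j => F^[s] y (j + c) := by
  induction s with
  | zero => rfl
  | succ s ih =>
    rw [Function.iterate_succ_apply', ih, aux_shift1 hf, Function.iterate_succ_apply']

lemma aux_nonzero
    (hf : ∀ x i, F x i = f fun k => x (i - (m : ℤ) + (k.val : ℤ)))
    (hsp : LeftSpreading F)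
    (x : ℤ → A) (hx : NumberLike x) :
    ∀ t : ℕ, ∃ j, F^[t] x j ≠ 0 := by
  obtain ⟨hx1, N, hN⟩ := hx
  intro t
  induction t with
  | zero => exact hx1
  | succ t ih =>
    set y := F^[t] x with hy
    have hyz : ∀ j < N - (n:ℤ) * t, y j = 0 := fun j hj => aux_localIter hf hsp.1 x N hN t j hj
    have hynl : NumberLike y := ⟨ih, N - (n:ℤ)*t, hyz⟩
    by_contra hcon
    push_neg at hcon
    have hFy : F y = fun _ => 0 := by
      funext j
      have := hcon j
      rwa [Function.iterate_succ_apply', ← hy] at this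
    -- all further iterates of y are zero
    have hiter : ∀ s : ℕ, 1 ≤ s → F^[s] y = fun _ => 0 := by
      intro s hs
      obtain ⟨s', rfl⟩ : ∃ s', s = s' + 1 := ⟨s - 1, by omega⟩
      rw [Function.iterate_succ_apply, hFy, aux_iter_zero hsp.1]
    -- shifted configuration
    set Z : ℤ := lbound (fun _ : ℤ => (0:A)) with hZ
    set c : ℤ := lbound y - Z with hc
    set y' : ℤ → A := fun j => y (j + c) with hy'
    have hspec := aux_lb_spec y hynl
    have hy'nl : NumberLike y' := by
      refine ⟨⟨lbound y - c, ?_⟩, ⟨N - (n:ℤ)*t - c, fun j hj => ?_⟩⟩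
      · simpa [hy', lbound] using hspec.1
      · exact hyz _ (by omega)
    obtain ⟨s, hs1, hslt⟩ := hsp.2 y' hy'nl
    have hFs : F^[s] y' = fun _ => 0 := by
      rw [hy', aux_shift hf y c s, hiter s hs1]
    rw [hFs] at hslt
    have hle : lbound y' ≤ Z := by
      have hmem : y' (lbound y - c) ≠ 0 := by simpa [hy', lbound] using hspec.1
      have hbdd : BddBelow {j : ℤ | y' j ≠ 0} := by
        refine ⟨N - (n:ℤ)*t - c, fun j hj => le_of_not_gt fun hlt => ?_⟩
        exact hj (hyz _ (by omega))
      have := csInf_le hbdd hmem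
      simpa [lbound, hc] using this
    rw [← hZ] at hslt
    omega

lemma aux_nlIter
    (hf : ∀ x i, F x i = f fun k => x (i - (m : ℤ) + (k.val : ℤ)))
    (hsp : LeftSpreading F)
    (x : ℤ → A) (hx : NumberLike x) :
    ∀ t : ℕ, NumberLike (F^[t] x) := by
  intro t
  obtain ⟨N, hN⟩ := hx.2
  exact ⟨aux_nonzero hf hsp x hx t, N - (n:ℤ)*t, fun j hj => aux_localIter hf hsp.1 x N hN t j hj⟩

lemma aux_lb_lower
    (hf : ∀ x i, F x i = f fun k => x (i - (m : ℤ) + (k.val : ℤ)))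
    (hsp : LeftSpreading F)
    (x : ℤ → A) (hx : NumberLike x) :
    ∀ t : ℕ, lbound x - (n:ℤ) * t ≤ lbound (F^[t] x) := by
  intro t
  by_contra hcon
  push_neg at hcon
  have h1 := (aux_lb_spec x hx).2
  have h2 := (aux_lb_spec (F^[t] x) (aux_nlIter hf hsp x hx t)).1
  exact h2 (aux_localIter hf hsp.1 x (lbound x) h1 t _ hcon)

lemma aux_escape
    (hf : ∀ x i, F x i = f fun k => x (i - (m : ℤ) + (k.val : ℤ)))
    (hsp : LeftSpreading F)
    (x : ℤ → A) (hx : NumberLike x) :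
    ∀ M : ℤ, ∃ t : ℕ, lbound (F^[t] x) < M := by
  have key : ∀ r : ℕ, ∃ t : ℕ, lbound (F^[t] x) < lbound x - r := by
    intro r
    induction r with
    | zero =>
      obtain ⟨t, _, hlt⟩ := hsp.2 x hx
      exact ⟨t, by simpa using hlt⟩
    | succ r ih =>
      obtain ⟨t, ht⟩ := ih
      obtain ⟨s, hs1, hslt⟩ := hsp.2 (F^[t] x) (aux_nlIter hf hsp x hx t)
      rw [← Function.iterate_add_apply] at hslt
      refine ⟨s + t, ?_⟩
      push_cast
      omega
  intro M
  obtain ⟨t, ht⟩ := key (lbound x - M).toNat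
  exact ⟨t, by omega⟩

lemma aux_evb
    (hf : ∀ x i, F x i = f fun k => x (i - (m : ℤ) + (k.val : ℤ)))
    (hsp : LeftSpreading F)
    (y : ℤ → A) (hy : NumberLike y) :
    ∀ᶠ t : ℕ in Filter.atTop,
      -((lbound (F^[t] y) : ℝ)) / (t : ℝ) ≤ (n:ℝ) + 1 := by
  rw [Filter.eventually_atTop]
  refine ⟨max 1 (-(lbound y)).toNat, fun t ht => ?_⟩
  have ht1 : 1 ≤ t := le_trans (le_max_left _ _) ht
  have ht2 : -(lbound y) ≤ (t:ℤ) := by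
    have := le_trans (le_max_right _ _) ht
    omega
  have hlow := aux_lb_lower hf hsp y hy t
  have htpos : (0:ℝ) < (t:ℝ) := by exact_mod_cast ht1
  rw [div_le_iff₀ htpos]
  have : -(lbound (F^[t] y)) ≤ ((n:ℤ) + 1) * t := by nlinarith [hlow, ht2]
  calc -((lbound (F^[t] y) : ℝ)) ≤ (((n:ℤ) + 1) * t : ℤ) := by exact_mod_cast this
    _ = ((n:ℝ) + 1) * t := by push_cast; ring

lemma aux_limsup_le
    (hf : ∀ x i, F x i = f fun k => x (i - (m : ℤ) + (k.val : ℤ)))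
    (hsp : LeftSpreading F)
    (y : ℤ → A) (hy : NumberLike y) :
    Filter.limsup (fun t : ℕ => -((lbound (F^[t] y) : ℝ)) / (t : ℝ)) Filter.atTop
      ≤ (n:ℝ) + 1 := by
  rw [Filter.limsup_eq]
  set S := {a : ℝ | ∀ᶠ t : ℕ in Filter.atTop, -((lbound (F^[t] y) : ℝ)) / (t : ℝ) ≤ a}
  have hmem : ((n:ℝ) + 1) ∈ S := aux_evb hf hsp y hy
  by_cases hb : BddBelow S
  · exact csInf_le hb hmem
  · rw [Real.sInf_of_not_bddBelow hb]; positivity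

end Aux

/-- If `F` is a rapidly left expansive CA with width `w` and `x` is a number-like
configuration, then the trace of `x` over `[i, i+w-1]` is not eventually periodic,
for any `i ∈ ℤ`. -/
theorem stmt_1 {A : Type*} [Zero A] (F : (ℤ → A) → ℤ → A) (hF : IsCA F)
    (w : ℕ) (hw : 1 ≤ w) (hre : RapidlyLeftExpansive F w)
    (x : ℤ → A) (hx : NumberLike x) (i : ℤ) :
    ¬ EvPeriodicSeq (fun t => fun k : Fin w => F^[t] x (i + (k.val : ℤ))) := by
  intro hEP
  obtain ⟨m, n, f, hf⟩ := hF
  obtain ⟨h, d, hexp, hsp, hs⟩ := hre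
  obtain ⟨p, hp, c, hper⟩ := hEP
  -- the right radius must be positive
  rcases Nat.eq_zero_or_pos n with hn0 | hn
  · obtain ⟨t, ht1, hlt⟩ := hsp.2 x hx
    have hlow := aux_lb_lower hf hsp x hx t
    rw [hn0] at hlow
    push_cast at hlow
    omega
  -- periodicity propagates to the left
  have P : ∀ k : ℕ, ∀ a : ℕ, a < w → ∀ t : ℕ, c + k * h ≤ t →
      F^[t + p] x (i - (k:ℤ) + (a:ℤ)) = F^[t] x (i - (k:ℤ) + (a:ℤ)) := by
    intro k
    induction k with
    | zero =>
      intro a ha t ht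
      have := congrFun (hper t (by omega : c ≤ t)) ⟨a, ha⟩
      simpa using this
    | succ k ih =>
      intro a ha t ht
      have ht2 : c + k * h + h ≤ t := by rw [Nat.succ_mul] at ht; omega
      cases a with
      | succ a' =>
        have h2 := ih a' (by omega) t (by omega)
        convert h2 using 2 <;> push_cast <;> ring
      | zero =>
        have hht : h ≤ t := by omega
        have key := hexp x x (i - (k:ℤ)) (i - (k:ℤ)) t (t + p) hht (by omega) ?_
        · convert key.symm using 2 <;> push_cast <;> ring
        · intro a' b ha' hb1 hb2
          have hhtZ : (h:ℤ) ≤ (t:ℤ) := by exact_mod_cast hht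
          have hb3 : (0:ℤ) ≤ (t:ℤ) - b := by omega
          have hsnn : ((((t:ℤ) - b).toNat : ℤ)) = (t:ℤ) - b := Int.toNat_of_nonneg hb3
          have hs2 : (((t + p : ℕ):ℤ) - b).toNat = ((t:ℤ) - b).toNat + p := by
            push_cast; omega
          have hsc : c + k * h ≤ ((t:ℤ) - b).toNat := by omega
          rw [hs2]
          exact (ih a' ha' _ hsc).symm
  -- dichotomy on how fast the left edge moves
  by_cases hB : ∀ K : ℕ, ∃ k : ℕ, K ≤ k ∧ ∃ t : ℕ,
      t ≤ c + k * h + p ∧ lbound (F^[t] x) ≤ i - (k:ℤ)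
  · -- "fast" case: contradicts the speed bound
    rcases Nat.eq_zero_or_pos h with hh0 | hh
    · -- h = 0 : only finitely many relevant times
      have hMex : ∃ M : ℤ, ∀ t ≤ c + p, M ≤ lbound (F^[t] x) := by
        classical
        have hne : ((Finset.range (c+p+1)).image (fun t => lbound (F^[t] x))).Nonempty := by
          simp [Finset.Nonempty]
          exact ⟨0, by omega⟩
        refine ⟨((Finset.range (c+p+1)).image (fun t => lbound (F^[t] x))).min' hne,
          fun t htle => Finset.min'_le _ _ ?_⟩
        exact Finset.mem_image.mpr ⟨t, Finset.mem_range.mpr (by omega), rfl⟩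
      obtain ⟨M, hM⟩ := hMex
      obtain ⟨k, hk, t, ht, hlb⟩ := hB ((i - M).toNat + 1)
      rw [hh0, Nat.mul_zero] at ht
      have := hM t (by omega)
      omega
    · -- h ≥ 1 : the limsup is at least 1/h
      have hlow : ∀ a : ℝ,
          (∀ᶠ t : ℕ in Filter.atTop, -((lbound (F^[t] x) : ℝ)) / (t : ℝ) ≤ a) →
          1 / (h:ℝ) ≤ a := by
        intro a ha
        rw [Filter.eventually_atTop] at ha
        obtain ⟨T, hT⟩ := ha
        by_contra hcon
        push_neg at hcon
        have hhpos : (0:ℝ) < (h:ℝ) := by exact_mod_cast hh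
        have hah : a * h < 1 := by
          have := (lt_div_iff₀ hhpos).mp hcon
          linarith
        have h1ah : (0:ℝ) < 1 - a * h := by linarith
        obtain ⟨K1, hK1⟩ := exists_nat_gt (((i:ℝ) + a * ((c:ℝ) + (p:ℝ))) / (1 - a * (h:ℝ)))
        obtain ⟨k, hk, t, ht, hlb⟩ :=
          hB (max K1 (((n:ℤ) * ((T:ℤ) + 1) + i - lbound x).toNat + i.toNat + 1))
        have hkK1 : K1 ≤ k := le_trans (le_max_left _ _) hk
        have hkK2 : ((n:ℤ) * ((T:ℤ) + 1) + i - lbound x).toNat + i.toNat + 1 ≤ k :=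
          le_trans (le_max_right _ _) hk
        have hlow2 := aux_lb_lower hf hsp x hx t
        have hti : (i:ℤ) ≤ (k:ℤ) := by omega
        have htT : T + 1 ≤ t := by
          by_contra hcontra
          push_neg at hcontra
          have htT' : (t:ℤ) ≤ (T:ℤ) := by exact_mod_cast Nat.lt_succ_iff.mp hcontra
          have e1 : (n:ℤ) * t ≤ (n:ℤ) * T :=
            mul_le_mul_of_nonneg_left htT' (by positivity)
          have e2 : (n:ℤ) * ((T:ℤ)+1) = (n:ℤ) * T + n := by ring
          have e3 : (1:ℤ) ≤ (n:ℤ) := by exact_mod_cast hn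
          have h2 : ((n:ℤ)) * ((T:ℤ)+1) + i - lbound x ≤ (k:ℤ) := by omega
          linarith
        have ht1 : 1 ≤ t := by omega
        have hua := hT t (by omega)
        have htpos : (0:ℝ) < (t:ℝ) := by exact_mod_cast ht1
        have hc0 : (0:ℝ) ≤ (c:ℝ) := by positivity
        have hkh0 : (0:ℝ) ≤ (k:ℝ) * (h:ℝ) := by positivity
        have hp1 : (1:ℝ) ≤ (p:ℝ) := by exact_mod_cast hp
        have hDpos : (0:ℝ) < (c:ℝ) + (k:ℝ) * (h:ℝ) + (p:ℝ) := by linarith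
        have hLk : ((k:ℝ) - (i:ℝ)) ≤ -((lbound (F^[t] x) : ℝ)) := by
          have : (k:ℤ) - i ≤ -(lbound (F^[t] x)) := by omega
          exact_mod_cast this
        have hnum : (0:ℝ) ≤ -((lbound (F^[t] x) : ℝ)) := by
          have : (0:ℝ) ≤ (k:ℝ) - (i:ℝ) := by
            have := hti; exact sub_nonneg.mpr (by exact_mod_cast this)
          linarith
        have htD : (t:ℝ) ≤ (c:ℝ) + (k:ℝ) * (h:ℝ) + (p:ℝ) := by
          calc (t:ℝ) ≤ ((c + k * h + p : ℕ) : ℝ) := by exact_mod_cast ht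
          _ = (c:ℝ) + (k:ℝ) * (h:ℝ) + (p:ℝ) := by push_cast; ring
        have hfrac : ((k:ℝ) - (i:ℝ)) / ((c:ℝ) + (k:ℝ) * (h:ℝ) + (p:ℝ)) ≤
            -((lbound (F^[t] x) : ℝ)) / (t : ℝ) :=
          div_le_div₀ hnum hLk htpos htD
        have hfin : ((k:ℝ) - (i:ℝ)) ≤ a * ((c:ℝ) + (k:ℝ) * (h:ℝ) + (p:ℝ)) := by
          have := le_trans hfrac hua
          rwa [div_le_iff₀ hDpos] at this
        have hK1' : (i:ℝ) + a * ((c:ℝ) + (p:ℝ)) < (K1:ℝ) * (1 - a * (h:ℝ)) := by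
          have := (div_lt_iff₀ h1ah).mp hK1
          linarith
        have hK1k : ((K1:ℝ)) ≤ (k:ℝ) := by exact_mod_cast hkK1
        have hstep : (K1:ℝ) * (1 - a * (h:ℝ)) ≤ (k:ℝ) * (1 - a * (h:ℝ)) :=
          mul_le_mul_of_nonneg_right hK1k (le_of_lt h1ah)
        nlinarith [hfin, hK1', hstep]
      have hS : 1 / (h:ℝ) ≤
          Filter.limsup (fun t : ℕ => -((lbound (F^[t] x) : ℝ)) / (t : ℝ)) Filter.atTop := by
        rw [Filter.limsup_eq]
        exact le_csInf ⟨(n:ℝ)+1, aux_evb hf hsp x hx⟩ fun b hb => hlow b hb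
      have hsup : Filter.limsup (fun t : ℕ => -((lbound (F^[t] x) : ℝ)) / (t : ℝ))
          Filter.atTop ≤ spreadingSpeed F := by
        have hbdd : BddAbove (Set.range (fun x' : {x : ℤ → A // NumberLike x} =>
            Filter.limsup (fun t : ℕ => -((lbound (F^[t] x'.1) : ℝ)) / (t : ℝ))
              Filter.atTop)) := by
          refine ⟨(n:ℝ)+1, ?_⟩
          rintro _ ⟨x', rfl⟩
          exact aux_limsup_le hf hsp x'.1 x'.2
        exact le_ciSup hbdd (⟨x, hx⟩ : {x : ℤ → A // NumberLike x})
      have h1 : 1 / (h:ℝ) ≤ spreadingSpeed F := le_trans hS hsup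
      have hhpos : (0:ℝ) < (h:ℝ) := by exact_mod_cast hh
      have hge : (1:ℝ) ≤ spreadingSpeed F * (h:ℝ) := by
        calc (1:ℝ) = 1 / (h:ℝ) * (h:ℝ) := by field_simp
        _ ≤ spreadingSpeed F * (h:ℝ) := mul_le_mul_of_nonneg_right h1 (le_of_lt hhpos)
      linarith
  · -- "slow" case: a whole final segment of columns is identically zero
    push_neg at hB
    obtain ⟨K, hK⟩ := hB
    have hzero : ∀ k : ℕ, K ≤ k → ∀ t : ℕ, F^[t] x (i - (k:ℤ)) = 0 := by
      intro k hk t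
      induction t using Nat.strong_induction_on with
      | _ t IH =>
        by_cases hle : t ≤ c + k * h + p
        · exact (aux_lb_spec (F^[t] x) (aux_nlIter hf hsp x hx t)).2 _ (hK k hk t hle)
        · push_neg at hle
          have hpk : c + k * h ≤ t - p := by omega
          have heq := P k 0 hw (t - p) hpk
          have ht' : t - p + p = t := by omega
          rw [ht'] at heq
          have h0 := IH (t - p) (by omega)
          calc F^[t] x (i - (k:ℤ)) = F^[t] x (i - (k:ℤ) + ((0:ℕ):ℤ)) := by norm_num
          _ = F^[t - p] x (i - (k:ℤ) + ((0:ℕ):ℤ)) := heq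
          _ = 0 := by simpa using h0
    obtain ⟨t, ht⟩ := aux_escape hf hsp x hx (i - (K:ℤ))
    have hmem := (aux_lb_spec (F^[t] x) (aux_nlIter hf hsp x hx t)).1
    have hkk : K ≤ (i - lbound (F^[t] x)).toNat := by omega
    have hz := hzero _ hkk t
    have hik : i - (((i - lbound (F^[t] x)).toNat : ℕ) : ℤ) = lbound (F^[t] x) := by omega
    rw [hik] at hz
    exact hmem hz
end

section
/- Let p > q > 1 be coprime integers and n = pq. The multiplication automaton Mul_{p,pq} with (0,1) local rule mul_{p,pq}(a,b) = a₀p + b₁, where a = a₁q + a₀ and b = b₁q + b₀ with a₀,b₀ ∈ {0,...,q-1} and a₁,b₁ ∈ {0,...,p-1}, satisfies real_n(Mul_{p,pq}(config_n(ξ))) = pξ for all real ξ > 0. -/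
/-- The `i`-th digit of `ξ` in base `n`: `⌊ξ / n^i⌋ mod n`. -/
noncomputable def digitN (n : ℕ) (ξ : ℝ) (i : ℤ) : ℕ :=
  (⌊ξ / (n : ℝ) ^ i⌋ % (n : ℤ)).toNat

/-- The configuration of base-`n` digits of `ξ`: `configN n ξ [i] = ξ_{-i-1}`. -/
noncomputable def configN (n : ℕ) (hn : 0 < n) (ξ : ℝ) : ℤ → Fin n :=
  fun i => ⟨digitN n ξ (-i - 1) % n, Nat.mod_lt _ hn⟩

/-- The real number represented by a configuration: `Σ_i x[-i] n^{i-1} = Σ_i x[i] n^{-i-1}`. -/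
noncomputable def realN (n : ℕ) {m : ℕ} (x : ℤ → Fin m) : ℝ :=
  ∑' i : ℤ, ((x i : ℕ) : ℝ) * (n : ℝ) ^ (-i - 1)

/-- A configuration over `{0,...,m-1}` is number-like. -/
def NumberLikeF {m : ℕ} (x : ℤ → Fin m) : Prop :=
  (∃ i, (x i : ℕ) ≠ 0) ∧ ∃ N : ℤ, ∀ i < N, (x i : ℕ) = 0

/-- The local rule of multiplication by `p` in base `pq`: with `a = a₁q + a₀`,
`b = b₁q + b₀`, it maps `(a, b) ↦ a₀ p + b₁` (reduction mod `pq` never takes effect). -/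
def mulRule (p q : ℕ) (hn : 0 < p * q) (a b : Fin (p * q)) : Fin (p * q) :=
  ⟨((a : ℕ) % q * p + (b : ℕ) / q) % (p * q), Nat.mod_lt _ hn⟩

/-- The multiplication automaton `Mul_{p,pq}`, a CA with `(0,1)` local rule `mulRule`. -/
def mulP (p q : ℕ) (hn : 0 < p * q) (x : ℤ → Fin (p * q)) : ℤ → Fin (p * q) :=
  fun i => mulRule p q hn (x i) (x (i + 1))

/-- The fractional multiplication automaton `Mul_{p/q,pq} = σ⁻¹ ∘ Mul_{p,pq} ∘ Mul_{p,pq}`. -/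
def mulFrac (p q : ℕ) (hn : 0 < p * q) (x : ℤ → Fin (p * q)) : ℤ → Fin (p * q) :=
  fun i => mulP p q hn (mulP p q hn x) (i - 1)

lemma myfloor_div (a : ℝ) (m : ℕ) (hm : 0 < m) : ⌊a / (m : ℝ)⌋ = ⌊a⌋ / m := by
  have hm' : (0:ℝ) < m := by exact_mod_cast hm
  rw [Int.floor_eq_iff]
  constructor
  · rw [le_div_iff₀ hm']
    calc ((⌊a⌋ / (m:ℤ) : ℤ) : ℝ) * m = ((⌊a⌋ / (m:ℤ) * m : ℤ) : ℝ) := by push_cast; ring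
    _ ≤ (⌊a⌋ : ℝ) := by exact_mod_cast Int.ediv_mul_le ⌊a⌋ (by exact_mod_cast hm.ne')
    _ ≤ a := Int.floor_le a
  · rw [div_lt_iff₀ hm']
    have h1 : ⌊a⌋ < (⌊a⌋ / (m:ℤ) + 1) * m := Int.lt_ediv_add_one_mul_self ⌊a⌋ (by exact_mod_cast hm)
    calc a < (⌊a⌋ : ℝ) + 1 := Int.lt_floor_add_one a
    _ ≤ ((⌊a⌋ / (m:ℤ) + 1) * m : ℤ) := by exact_mod_cast h1
    _ = ((⌊a⌋/(m:ℤ) : ℤ) + 1) * m := by push_cast; ring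

noncomputable def gfun (n : ℕ) (ξ : ℝ) (i : ℤ) : ℝ := (⌊ξ / (n:ℝ)^i⌋ : ℝ) * (n:ℝ)^i

section digits
variable {n : ℕ} {ξ : ℝ}

lemma gfun_nonneg (hn : 0 < n) (hξ : 0 ≤ ξ) (i : ℤ) : 0 ≤ gfun n ξ i := by
  have hnp : (0:ℝ) < (n:ℝ)^i := zpow_pos (by exact_mod_cast hn) i
  exact mul_nonneg (by exact_mod_cast Int.floor_nonneg.2 (div_nonneg hξ hnp.le)) hnp.le

lemma gfun_le (hn : 0 < n) (i : ℤ) : gfun n ξ i ≤ ξ := by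
  have hnp : (0:ℝ) < (n:ℝ)^i := zpow_pos (by exact_mod_cast hn) i
  calc (⌊ξ / (n:ℝ)^i⌋ : ℝ) * (n:ℝ)^i ≤ (ξ / (n:ℝ)^i) * (n:ℝ)^i :=
        mul_le_mul_of_nonneg_right (Int.floor_le _) hnp.le
  _ = ξ := div_mul_cancel₀ _ hnp.ne'

lemma digit_tel (hn : 0 < n) (hξ : 0 ≤ ξ) (i : ℤ) :
    ((digitN n ξ i : ℕ) : ℝ) * (n:ℝ)^i = gfun n ξ i - gfun n ξ (i+1) := by
  have hnp : (0:ℝ) < (n:ℝ) := by exact_mod_cast hn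
  have hfl : ⌊ξ / (n:ℝ)^(i+1)⌋ = ⌊ξ / (n:ℝ)^i⌋ / (n:ℤ) := by
    rw [← myfloor_div (ξ / (n:ℝ)^i) n hn]
    congr 1
    rw [zpow_add_one₀ hnp.ne']
    ring
  have hd : ((digitN n ξ i : ℕ) : ℤ) = ⌊ξ / (n:ℝ)^i⌋ - (n:ℤ) * ⌊ξ / (n:ℝ)^(i+1)⌋ := by
    rw [digitN, Int.toNat_of_nonneg (Int.emod_nonneg _ (by exact_mod_cast hn.ne')), hfl]
    exact Int.emod_def _ _
  have hd' : ((digitN n ξ i : ℕ) : ℝ) = (⌊ξ / (n:ℝ)^i⌋ : ℝ) - (n:ℝ) * (⌊ξ / (n:ℝ)^(i+1)⌋ : ℝ) := by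
    exact_mod_cast congrArg (Int.cast : ℤ → ℝ) hd
  rw [hd', gfun, gfun, zpow_add_one₀ hnp.ne']
  ring

lemma tel_sum' (g : ℤ → ℝ) (a : ℤ) (k : ℕ) :
    ∑ i ∈ Finset.Icc a (a - 1 + k), (g i - g (i+1)) = g a - g (a + k) := by
  induction k with
  | zero => simp [Finset.Icc_eq_empty_of_lt (by omega : a - 1 + (0:ℕ) < a)]
  | succ k ih =>
      have hins : Finset.Icc a (a - 1 + (k+1 : ℕ)) = insert (a + k) (Finset.Icc a (a - 1 + k)) := by
        ext x
        simp only [Finset.mem_Icc, Finset.mem_insert]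
        push_cast
        omega
      have hnm : (a + (k:ℤ)) ∉ Finset.Icc a (a - 1 + (k:ℕ)) := by
        simp only [Finset.mem_Icc]; omega
      rw [hins, Finset.sum_insert hnm, ih]
      have : a + ((k:ℕ)+1 : ℕ) = (a + k) + 1 := by push_cast; ring
      rw [this]
      ring

lemma tel_sum (g : ℤ → ℝ) (a b : ℤ) (h : a ≤ b + 1) :
    ∑ i ∈ Finset.Icc a b, (g i - g (i+1)) = g a - g (b+1) := by
  have hk : b = a - 1 + ((b + 1 - a).toNat : ℤ) := by omega
  have hk2 : b + 1 = a + ((b + 1 - a).toNat : ℤ) := by omega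
  rw [hk2]
  calc ∑ i ∈ Finset.Icc a b, (g i - g (i+1))
      = ∑ i ∈ Finset.Icc a (a - 1 + ((b + 1 - a).toNat : ℤ)), (g i - g (i+1)) := by rw [← hk]
  _ = g a - g (a + (b + 1 - a).toNat) := tel_sum' g a _

lemma digit_sum_Icc (hn : 0 < n) (hξ : 0 ≤ ξ) (a b : ℤ) (h : a ≤ b + 1) :
    ∑ i ∈ Finset.Icc a b, ((digitN n ξ i : ℕ) : ℝ) * (n:ℝ)^i = gfun n ξ a - gfun n ξ (b+1) := by
  rw [Finset.sum_congr rfl (fun i _ => digit_tel hn hξ i)]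
  exact tel_sum _ a b h

lemma digit_hasSum (hn : 2 ≤ n) (hξ : 0 < ξ) :
    HasSum (fun i : ℤ => ((digitN n ξ i : ℕ) : ℝ) * (n:ℝ)^i) ξ := by
  have hn0 : 0 < n := by omega
  have hnR : (1:ℝ) < n := by exact_mod_cast hn
  have hnonneg : ∀ i : ℤ, 0 ≤ ((digitN n ξ i : ℕ) : ℝ) * (n:ℝ)^i := fun i =>
    mul_nonneg (Nat.cast_nonneg _) (zpow_pos (by positivity) i).le
  apply hasSum_of_isLUB_of_nonneg _ hnonneg
  constructor
  · rintro x ⟨s, rfl⟩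
    rcases s.eq_empty_or_nonempty with rfl | hs
    · simpa using hξ.le
    · have hsub : s ⊆ Finset.Icc (s.min' hs) (s.max' hs) := fun i hi =>
        Finset.mem_Icc.2 ⟨s.min'_le i hi, s.le_max' i hi⟩
      calc ∑ i ∈ s, ((digitN n ξ i : ℕ) : ℝ) * (n:ℝ)^i
          ≤ ∑ i ∈ Finset.Icc (s.min' hs) (s.max' hs), ((digitN n ξ i : ℕ) : ℝ) * (n:ℝ)^i :=
            Finset.sum_le_sum_of_subset_of_nonneg hsub (fun i _ _ => hnonneg i)
      _ = gfun n ξ (s.min' hs) - gfun n ξ (s.max' hs + 1) :=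
            digit_sum_Icc hn0 hξ.le _ _ (by linarith [s.min'_le _ (s.max'_mem hs)])
      _ ≤ gfun n ξ (s.min' hs) := by linarith [gfun_nonneg hn0 hξ.le (s.max' hs + 1)]
      _ ≤ ξ := gfun_le hn0 _
  · intro w hw
    refine le_of_forall_pos_le_add (fun ε hε => ?_)
    obtain ⟨k, hk⟩ : ∃ k : ℕ, (1 / (n:ℝ))^k < ε := by
      apply exists_pow_lt_of_lt_one hε
      rw [div_lt_one (by linarith)]; linarith
    obtain ⟨m, hm⟩ : ∃ m : ℕ, ξ < (n:ℝ)^m := pow_unbounded_of_one_lt ξ hnR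
    have hgm : gfun n ξ (m:ℤ) = 0 := by
      have h0 : ⌊ξ / (n:ℝ)^(m:ℤ)⌋ = 0 := by
        rw [Int.floor_eq_zero_iff]
        constructor
        · exact div_nonneg hξ.le (zpow_pos (by linarith) _).le
        · rw [div_lt_one (zpow_pos (by linarith) _)]
          rw [zpow_natCast]; exact hm
      rw [gfun, h0]; simp
    have hsum : ∑ i ∈ Finset.Icc (-(k:ℤ)) ((m:ℤ) - 1), ((digitN n ξ i : ℕ) : ℝ) * (n:ℝ)^i
        = gfun n ξ (-(k:ℤ)) := by
      rw [digit_sum_Icc hn0 hξ.le _ _ (by omega), show (m:ℤ) - 1 + 1 = (m:ℤ) by ring, hgm,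
        sub_zero]
    have hwge : gfun n ξ (-(k:ℤ)) ≤ w := by
      rw [← hsum]; exact hw ⟨_, rfl⟩
    have hglb : ξ - (1/(n:ℝ))^k ≤ gfun n ξ (-(k:ℤ)) := by
      have hnp : (0:ℝ) < (n:ℝ)^(-(k:ℤ)) := zpow_pos (by linarith) _
      have hfl : ξ / (n:ℝ)^(-(k:ℤ)) - 1 ≤ (⌊ξ / (n:ℝ)^(-(k:ℤ))⌋ : ℝ) := by
        linarith [Int.lt_floor_add_one (ξ / (n:ℝ)^(-(k:ℤ)))]
      have : (ξ / (n:ℝ)^(-(k:ℤ)) - 1) * (n:ℝ)^(-(k:ℤ)) ≤ gfun n ξ (-(k:ℤ)) :=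
        mul_le_mul_of_nonneg_right hfl hnp.le
      have heq : (ξ / (n:ℝ)^(-(k:ℤ)) - 1) * (n:ℝ)^(-(k:ℤ)) = ξ - (1/(n:ℝ))^k := by
        rw [sub_mul, div_mul_cancel₀ _ hnp.ne']
        congr 1
        rw [one_mul, div_pow, one_pow, zpow_neg, zpow_natCast, one_div]
      linarith [heq ▸ this]
    linarith

lemma digit_lt (hn : 0 < n) (ξ : ℝ) (i : ℤ) : digitN n ξ i < n := by
  rw [digitN]
  have h1 : 0 ≤ ⌊ξ / (n:ℝ)^i⌋ % (n:ℤ) := Int.emod_nonneg _ (by exact_mod_cast hn.ne')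
  have h2 : ⌊ξ / (n:ℝ)^i⌋ % (n:ℤ) < (n:ℤ) := Int.emod_lt_of_pos _ (by exact_mod_cast hn)
  omega

end digits

set_option maxHeartbeats 1000000 in
lemma mul_digit_hasSum {p q : ℕ} (hq : 1 < q) (hpq : q < p) {ξ : ℝ} (hξ : 0 < ξ) :
    HasSum (fun j : ℤ =>
      ((digitN (p*q) ξ j % q * p + digitN (p*q) ξ (j-1) / q : ℕ) : ℝ) * ((p*q : ℕ):ℝ)^j)
      ((p:ℝ) * ξ) := by
  have hq0 : 0 < q := by omega
  have hp0 : 0 < p := by omega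
  have hn2 : 2 ≤ p * q := by
    calc 2 ≤ q := hq
    _ = 1 * q := (one_mul q).symm
    _ ≤ p * q := Nat.mul_le_mul_right q (by omega)
  set d : ℤ → ℕ := fun i => digitN (p*q) ξ i with hd
  set nR : ℝ := ((p*q : ℕ) : ℝ) with hnR
  have hnRpos : (0:ℝ) < nR := by rw [hnR]; exact_mod_cast (by omega : 0 < p * q)
  have hf : HasSum (fun i : ℤ => ((d i : ℕ) : ℝ) * nR^i) ξ := digit_hasSum hn2 hξ
  have hpf : HasSum (fun i : ℤ => (p:ℝ) * (((d i : ℕ) : ℝ) * nR^i)) ((p:ℝ) * ξ) :=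
    hf.mul_left _
  set A : ℤ → ℝ := fun j => ((d j % q * p : ℕ) : ℝ) * nR^j with hA
  set B : ℤ → ℝ := fun j => ((q * p * (d j / q) : ℕ) : ℝ) * nR^j with hB
  have hsplit : ∀ j, (p:ℝ) * (((d j : ℕ) : ℝ) * nR^j) = A j + B j := by
    intro j
    have hnat : d j % q * p + q * p * (d j / q) = p * d j := by
      calc d j % q * p + q * p * (d j / q)
          = (q * (d j / q) + d j % q) * p := by ring
      _ = d j * p := by rw [Nat.div_add_mod]
      _ = p * d j := Nat.mul_comm _ _
    have hcast : ((d j % q : ℕ):ℝ) * p + (q:ℝ) * p * ((d j / q : ℕ):ℝ) = (p:ℝ) * d j := by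
      have := congrArg (Nat.cast : ℕ → ℝ) hnat
      push_cast at this
      linarith
    rw [hA, hB]
    push_cast
    linear_combination (-nR^j) * hcast
  have hAnonneg : ∀ j, 0 ≤ A j := fun j =>
    mul_nonneg (Nat.cast_nonneg _) (zpow_pos hnRpos j).le
  have hAle : ∀ j, A j ≤ (p:ℝ) * (((d j : ℕ) : ℝ) * nR^j) := by
    intro j
    rw [hsplit j]
    have : 0 ≤ B j := mul_nonneg (Nat.cast_nonneg _) (zpow_pos hnRpos j).le
    linarith
  have hAsum : Summable A := Summable.of_nonneg_of_le hAnonneg hAle hpf.summable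
  have hAhs : HasSum A (∑' j, A j) := hAsum.hasSum
  have hBhs : HasSum B ((p:ℝ) * ξ - ∑' j, A j) := by
    have h2 := hpf.sub hAhs
    have hfn : (fun j => (p:ℝ) * (((d j : ℕ) : ℝ) * nR^j) - A j) = B := by
      funext j; rw [hsplit j]; ring
    rwa [hfn] at h2
  have hBshift : HasSum (fun j => B (j - 1)) ((p:ℝ) * ξ - ∑' j, A j) :=
    ((Equiv.subRight (1:ℤ)).hasSum_iff).mpr hBhs
  have htot : HasSum (fun j => A j + B (j - 1)) ((p:ℝ) * ξ) := by
    have h3 := hAhs.add hBshift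
    have : (∑' j, A j) + ((p:ℝ) * ξ - ∑' j, A j) = (p:ℝ) * ξ := by ring
    rwa [this] at h3
  have hfun : ∀ j : ℤ, ((d j % q * p + d (j-1) / q : ℕ) : ℝ) * nR^j = A j + B (j - 1) := by
    intro j
    have hpow : (q:ℝ) * (p:ℝ) * nR^(j-1) = nR^j := by
      rw [show nR^j = nR^(j-1) * nR by rw [← zpow_add_one₀ hnRpos.ne']; congr 1; ring, hnR]
      push_cast
      ring
    rw [hA, hB]
    push_cast
    linear_combination (-((d (j-1) / q : ℕ):ℝ)) * hpow
  rw [funext hfun]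
  exact htot

/-- For coprime `p > q > 1` and `n = pq`, the multiplication automaton `Mul_{p,pq}`
satisfies `real_n(Mul_{p,pq}(config_n(ξ))) = p ξ` for all real `ξ > 0`. -/
theorem stmt_4 (p q : ℕ) (hq : 1 < q) (hpq : q < p) (hco : Nat.Coprime p q)
    (hn : 0 < p * q) (ξ : ℝ) (hξ : 0 < ξ) :
    realN (p * q) (mulP p q hn (configN (p * q) hn ξ)) = (p : ℝ) * ξ := by
  have hq0 : 0 < q := by omega
  have hval : ∀ i : ℤ, ((mulP p q hn (configN (p*q) hn ξ) i : ℕ))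
      = digitN (p*q) ξ (-i-1) % q * p + digitN (p*q) ξ (-i-2) / q := by
    intro i
    show ((configN (p*q) hn ξ i : ℕ) % q * p + (configN (p*q) hn ξ (i+1) : ℕ) / q) % (p*q) = _
    have hc : ∀ j : ℤ, ((configN (p*q) hn ξ j : ℕ)) = digitN (p*q) ξ (-j-1) := by
      intro j
      show digitN (p*q) ξ (-j-1) % (p*q) = _
      exact Nat.mod_eq_of_lt (digit_lt hn ξ _)
    rw [hc, hc, show -(i+1)-1 = -i-2 from by ring]
    have h1 : digitN (p*q) ξ (-i-1) % q < q := Nat.mod_lt _ hq0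
    have h2 : digitN (p*q) ξ (-i-2) / q < p := (Nat.div_lt_iff_lt_mul hq0).2 (digit_lt hn ξ _)
    apply Nat.mod_eq_of_lt
    have h1' : (digitN (p*q) ξ (-i-1) % q + 1) * p ≤ q * p := Nat.mul_le_mul_right p h1
    rw [add_mul, one_mul, Nat.mul_comm q p] at h1'
    linarith
  have hmain := mul_digit_hasSum hq hpq hξ
  set e : ℤ ≃ ℤ := Function.Involutive.toPerm (fun i => -i-1) (fun i => by ring) with he
  have hF : HasSum (fun i : ℤ =>
      ((digitN (p*q) ξ (-i-1) % q * p + digitN (p*q) ξ (-i-2) / q : ℕ) : ℝ)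
        * ((p*q : ℕ):ℝ)^(-i-1)) ((p:ℝ) * ξ) := by
    have h := (Equiv.hasSum_iff e).mpr hmain
    have hcomp : ((fun j : ℤ =>
        ((digitN (p*q) ξ j % q * p + digitN (p*q) ξ (j-1) / q : ℕ) : ℝ) * ((p*q : ℕ):ℝ)^j) ∘ e)
        = fun i : ℤ => ((digitN (p*q) ξ (-i-1) % q * p + digitN (p*q) ξ (-i-2) / q : ℕ) : ℝ)
            * ((p*q : ℕ):ℝ)^(-i-1) := by
      funext i
      show ((digitN (p*q) ξ (e i) % q * p + digitN (p*q) ξ (e i - 1) / q : ℕ) : ℝ)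
          * ((p*q : ℕ):ℝ)^(e i) = _
      have h1 : e i = -i - 1 := rfl
      rw [h1, show -i-1-1 = -i-2 from by ring]
    rwa [hcomp] at h
  simp only [realN]
  rw [tsum_congr (fun i => by rw [hval i])]
  exact hF.tsum_eq
end

section
/- An elementary cellular automaton F with local rule f is left spreading on number-like configurations if and only if f(0,0,1) = 1; and in that case its spreading speed equals 1. -/
section Aux

variable (f : Fin 2 → Fin 2 → Fin 2 → Fin 2)
    (F : (ℤ → Fin 2) → ℤ → Fin 2)
    (hF : ∀ x i, F x i = f (x (i - 1)) (x i) (x (i + 1)))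
    (h0 : f 0 0 0 = 0)

lemma fin2_eq_one {a : Fin 2} (h : a ≠ 0) : a = 1 := by
  have h2 := a.isLt
  have h3 : a.val ≠ 0 := fun hv => h (Fin.ext hv)
  exact Fin.ext (by omega)

include hF h0 in
lemma step_lemma (h1 : f 0 0 1 = 1) (x : ℤ → Fin 2) (hx : NumberLike x) :
    NumberLike (F x) ∧ lbound (F x) = lbound x - 1 := by
  obtain ⟨⟨i0, hi0⟩, N0, hN0⟩ := hx
  set S : Set ℤ := {i | x i ≠ 0} with hS
  have hne : S.Nonempty := ⟨i0, hi0⟩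
  have hbdd : BddBelow S := ⟨N0, fun i hi => by
    by_contra h; push_neg at h; exact hi (hN0 i h)⟩
  have hNS : lbound x = sInf S := rfl
  set N : ℤ := lbound x with hNdef
  have hmem : x N ≠ 0 := by rw [hNS]; exact Int.csInf_mem hne hbdd
  have hzero : ∀ i < N, x i = 0 := by
    intro i hi
    by_contra h
    have := csInf_le hbdd (show i ∈ S from h)
    rw [← hNS] at this
    omega
  have hxN : x N = 1 := fin2_eq_one hmem
  have key : ∀ i < N - 1, F x i = 0 := by
    intro i hi
    rw [hF, hzero _ (by omega), hzero _ (by omega), hzero _ (by omega), h0]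
  have hmem' : F x (N - 1) ≠ 0 := by
    rw [hF]
    have e2 : N - 1 + 1 = N := by omega
    rw [hzero _ (by omega), hzero _ (by omega), e2, hxN, h1]
    decide
  have hlb : ∀ i ∈ {i | F x i ≠ 0}, N - 1 ≤ i := by
    intro i hi
    by_contra h; push_neg at h; exact hi (key i h)
  refine ⟨⟨⟨N - 1, hmem'⟩, ⟨N - 1, key⟩⟩, ?_⟩
  exact le_antisymm (csInf_le ⟨N - 1, hlb⟩ hmem') (le_csInf ⟨N - 1, hmem'⟩ hlb)

include hF h0 in
lemma iter_lemma (h1 : f 0 0 1 = 1) (x : ℤ → Fin 2) (hx : NumberLike x) (t : ℕ) :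
    NumberLike (F^[t] x) ∧ lbound (F^[t] x) = lbound x - t := by
  induction t with
  | zero => simpa using hx
  | succ t ih =>
    rw [Function.iterate_succ_apply']
    obtain ⟨h2, h3⟩ := step_lemma f F hF h0 h1 (F^[t] x) ih.1
    refine ⟨h2, ?_⟩
    rw [h3, ih.2]
    push_cast
    ring

end Aux

/-- An elementary cellular automaton `F` with local rule `f` (with `f(0,0,0) = 0`)
is left spreading on number-like configurations if and only if `f(0,0,1) = 1`;
and in that case its spreading speed equals `1`. -/
theorem stmt_6 (f : Fin 2 → Fin 2 → Fin 2 → Fin 2)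
    (F : (ℤ → Fin 2) → ℤ → Fin 2)
    (hF : ∀ x i, F x i = f (x (i - 1)) (x i) (x (i + 1)))
    (h0 : f 0 0 0 = 0) :
    (LeftSpreading F ↔ f 0 0 1 = 1) ∧ (f 0 0 1 = 1 → spreadingSpeed F = 1) := by
  constructor
  · constructor
    · -- LeftSpreading → f 0 0 1 = 1
      intro hLS
      by_contra hne
      have h1 : f 0 0 1 = 0 := by
        by_contra h2; exact hne (fin2_eq_one h2)
      set x : ℤ → Fin 2 := fun i => if 0 ≤ i then 1 else 0 with hxdef
      have hx0 : x 0 ≠ 0 := by simp [hxdef]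
      have hxneg : ∀ i < (0:ℤ), x i = 0 := fun i hi => by
        simp [hxdef, not_le.mpr hi]
      have hnl : NumberLike x := ⟨⟨0, hx0⟩, ⟨0, hxneg⟩⟩
      have lb : ∀ i ∈ {i : ℤ | x i ≠ 0}, (0:ℤ) ≤ i := fun i hi => by
        by_contra h; push_neg at h; exact hi (hxneg i h)
      have hlx : lbound x = 0 :=
        le_antisymm (csInf_le ⟨0, lb⟩ hx0) (le_csInf ⟨0, hx0⟩ lb)
      have hz : ∀ t : ℕ, ∀ i < (0:ℤ), F^[t] x i = 0 := by
        intro t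
        induction t with
        | zero => exact hxneg
        | succ t ih =>
          intro i hi
          rw [Function.iterate_succ_apply', hF, ih (i-1) (by omega), ih i hi]
          by_cases hc : i + 1 < 0
          · rw [ih _ hc, h0]
          · have he : i + 1 = 0 := by omega
            rw [he]
            by_cases hc2 : F^[t] x 0 = 0
            · rw [hc2, h0]
            · rw [fin2_eq_one hc2, h1]
      obtain ⟨t, ht1, ht2⟩ := hLS.2 x hnl
      rw [hlx] at ht2
      by_cases hne2 : {i : ℤ | F^[t] x i ≠ 0}.Nonempty
      · have hge : (0:ℤ) ≤ lbound (F^[t] x) :=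
          le_csInf hne2 (fun i hi => by
            by_contra h; push_neg at h; exact hi (hz t i h))
        omega
      · have he : {i : ℤ | F^[t] x i ≠ 0} = ∅ := Set.not_nonempty_iff_eq_empty.mp hne2
        have : lbound (F^[t] x) = 0 := by
          rw [lbound, he, Int.csInf_empty]
        omega
    · intro h1
      refine ⟨funext fun i => by rw [hF]; exact h0, ?_⟩
      intro x hx
      refine ⟨1, le_refl 1, ?_⟩
      have := (iter_lemma f F hF h0 h1 x hx 1).2
      rw [this]
      push_cast
      omega
  · intro h1
    have hlim : ∀ x : {x : ℤ → Fin 2 // NumberLike x},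
        Filter.limsup (fun t : ℕ => -((lbound (F^[t] x.1) : ℝ)) / (t : ℝ))
          Filter.atTop = 1 := by
      intro x
      apply Filter.Tendsto.limsup_eq
      have key : ∀ t : ℕ, lbound (F^[t] x.1) = lbound x.1 - t :=
        fun t => (iter_lemma f F hF h0 h1 x.1 x.2 t).2
      have h2 : Filter.Tendsto (fun t : ℕ => 1 - (lbound x.1 : ℝ) / (t : ℝ))
          Filter.atTop (nhds 1) := by
        have h3 := tendsto_const_div_atTop_nhds_zero_nat (lbound x.1 : ℝ)
        simpa using (tendsto_const_nhds (α := ℕ) (x := (1:ℝ))).sub h3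
      refine Filter.Tendsto.congr' ?_ h2
      filter_upwards [Filter.eventually_ge_atTop 1] with t ht
      have htne : (t:ℝ) ≠ 0 := Nat.cast_ne_zero.mpr (by omega)
      rw [key t]
      push_cast
      field_simp
      ring
    have hNE : Nonempty {x : ℤ → Fin 2 // NumberLike x} := by
      refine ⟨⟨fun i => if 0 ≤ i then 1 else 0, ⟨0, by simp⟩, ⟨0, fun i hi => ?_⟩⟩⟩
      simp [not_le.mpr hi]
    rw [spreadingSpeed]
    simp only [hlim]
    exact ciSup_const
end

section
/- Let F: A^Z → A^Z be a left expansive cellular automaton with dimensions (h,d,w) and radius r, and let x ∈ A^Z. Suppose t ≥ 1, N ∈ N, c ∈ Z and K = |A|^{tw} satisfy (h+d)K ≤ tN, and frac_c(F^{it}(x)) = frac_c(x) for all 0 ≤ i ≤ N, where frac_c(y) denotes the right-infinite sequence (y[c+j])_{j∈N}. Then x is eventually periodic. -/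
/-- `F` is a cellular automaton of radius `r`. -/
def HasRadius {A : Type*} (F : (ℤ → A) → ℤ → A) (r : ℕ) : Prop :=
  ∃ f : (Fin (2 * r + 1) → A) → A,
    ∀ x i, F x i = f fun k => x (i - (r : ℤ) + (k.val : ℤ))

/-- A two-sided configuration is eventually periodic (to the right). -/
def EvPeriodicConfig {A : Type*} (x : ℤ → A) : Prop :=
  ∃ p : ℕ, 1 ≤ p ∧ ∃ c : ℤ, ∀ i : ℤ, c ≤ i → x (i + p) = x i

/-- Let `F` be a left expansive CA with dimensions `(h,d,w)` and radius `r`, and let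
`x ∈ A^ℤ`. If `t ≥ 1`, `N`, `c` and `K = |A|^{tw}` satisfy `(h+d)K ≤ tN` and
`frac_c(F^{it}(x)) = frac_c(x)` for all `0 ≤ i ≤ N`, then `x` is eventually periodic. -/
theorem stmt_9 {A : Type*} [Fintype A] (F : (ℤ → A) → ℤ → A)
    (h d w r : ℕ) (hw : 1 ≤ w) (hexp : LeftExpansive F h d w) (hr : HasRadius F r)
    (x : ℤ → A) (t N : ℕ) (ht : 1 ≤ t) (c : ℤ)
    (hK : (h + d) * Fintype.card A ^ (t * w) ≤ t * N)
    (hfrac : ∀ i ≤ N, ∀ j : ℕ, F^[i * t] x (c + (j : ℤ)) = x (c + (j : ℤ))) :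
    EvPeriodicConfig x := by
  classical
  obtain ⟨f, hf⟩ := hr
  have hA : Nonempty A := ⟨x 0⟩
  have hcard : 1 ≤ Fintype.card A := Fintype.card_pos
  have hK1 : 1 ≤ Fintype.card A ^ (t * w) := Nat.one_le_pow _ _ hcard
  have hdN : h + d ≤ t * N := by
    calc h + d = (h + d) * 1 := by ring
      _ ≤ (h + d) * Fintype.card A ^ (t * w) := Nat.mul_le_mul_left _ hK1
      _ ≤ t * N := hK
  -- locality of iterates
  have loc : ∀ (s : ℕ) (y₁ y₂ : ℤ → A), (∀ p : ℤ, c ≤ p → y₁ p = y₂ p) →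
      ∀ p : ℤ, c + ((s * r : ℕ) : ℤ) ≤ p → F^[s] y₁ p = F^[s] y₂ p := by
    intro s
    induction s with
    | zero =>
      intro y₁ y₂ hagr p hp
      simpa using hagr p (by simpa using hp)
    | succ s ih =>
      intro y₁ y₂ hagr p hp
      have e : (s + 1) * r = s * r + r := by ring
      rw [e, Nat.cast_add] at hp
      rw [Function.iterate_succ_apply', Function.iterate_succ_apply', hf, hf]
      congr 1
      funext k
      apply ih y₁ y₂ hagr
      have hk : (0 : ℤ) ≤ (k.val : ℤ) := Int.natCast_nonneg _
      omega
  -- time periodicity at columns ≥ c' := c + t*r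
  have per : ∀ u : ℕ, u < t * N → ∀ p : ℤ, c + ((t * r : ℕ) : ℤ) ≤ p →
      F^[u + t] x p = F^[u] x p := by
    intro u hu p hp
    have h0 : 0 < t := ht
    have hdm := Nat.div_add_mod u t
    have hiN : u / t < N := by
      rcases Nat.lt_or_ge (u / t) N with h1 | h1
      · exact h1
      · exfalso
        have : t * N ≤ t * (u / t) := Nat.mul_le_mul_left t h1
        omega
    have e1 : u + t = u % t + t * (u / t + 1) := by
      have : t * (u / t + 1) = t * (u / t) + t := by ring
      omega
    have e2 : u = u % t + t * (u / t) := by omega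
    rw [e1, Function.iterate_add_apply]
    conv_rhs => rw [e2, Function.iterate_add_apply]
    have hagr : ∀ q : ℤ, c ≤ q → F^[t * (u / t + 1)] x q = F^[t * (u / t)] x q := by
      intro q hq
      obtain ⟨jq, hjq⟩ : ∃ jq : ℕ, q = c + (jq : ℤ) := ⟨(q - c).toNat, by omega⟩
      rw [hjq, show t * (u / t + 1) = (u / t + 1) * t from Nat.mul_comm _ _,
        show t * (u / t) = (u / t) * t from Nat.mul_comm _ _,
        hfrac (u / t + 1) (by omega) jq, hfrac (u / t) (by omega) jq]
    apply loc (u % t) _ _ hagr p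
    have hle : (u % t) * r ≤ t * r := mul_le_mul_left (le_of_lt (Nat.mod_lt _ h0)) r
    omega
  have perm : ∀ (k s : ℕ) (p : ℤ), c + ((t * r : ℕ) : ℤ) ≤ p → s + t * k < t * N + t →
      F^[s + t * k] x p = F^[s] x p := by
    intro k
    induction k with
    | zero => intro s p hp hb; simp
    | succ k ih =>
      intro s p hp hb
      have e : s + t * (k + 1) = (s + t * k) + t := by ring
      have e2 : t * (k + 1) = t * k + t := by ring
      rw [e, per (s + t * k) (by omega) p hp, ih s p hp (by omega)]
  set c' : ℤ := c + ((t * r : ℕ) : ℤ) with hc'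
  set W : ℕ → Fin t → Fin w → A :=
    fun j s a => F^[s.1] x (c' + (j : ℤ) + (a.1 : ℤ)) with hW
  have key : ∀ (j a : ℕ), a < w → ∀ u : ℕ, u < t * N + t →
      F^[u] x (c' + (j : ℤ) + (a : ℤ)) = F^[u % t] x (c' + (j : ℤ) + (a : ℤ)) := by
    intro j a ha u hu
    have hdm := Nat.div_add_mod u t
    have e : u % t + t * (u / t) = u := by omega
    have := perm (u / t) (u % t) (c' + (j : ℤ) + (a : ℤ)) (by simp [hc']; omega) (by omega)
    rw [e] at this
    exact this
  have C : ∀ j j' : ℕ, W j = W j' → ∀ u : ℕ, u < t * N + t → ∀ a : ℕ, a < w →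
      F^[u] x (c' + (j : ℤ) + (a : ℤ)) = F^[u] x (c' + (j' : ℤ) + (a : ℤ)) := by
    intro j j' hWW u hu a ha
    rw [key j a ha u hu, key j' a ha u hu]
    have hmt : u % t < t := Nat.mod_lt _ (by omega)
    exact congrFun (congrFun hWW ⟨u % t, hmt⟩) ⟨a, ha⟩
  have L : ∀ j j' : ℕ, 1 ≤ j → 1 ≤ j' → W j = W j' → W (j - 1) = W (j' - 1) := by
    intro j j' hj hj' hWW
    funext s a
    have hs := s.2
    have haw := a.2
    show F^[s.1] x (c' + ((j - 1 : ℕ) : ℤ) + (a.1 : ℤ)) =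
      F^[s.1] x (c' + ((j' - 1 : ℕ) : ℤ) + (a.1 : ℤ))
    rcases Nat.eq_zero_or_pos a.1 with ha0 | hap
    · -- a = 0 : use expansivity
      obtain ⟨S, hS1, hS2, eT⟩ : ∃ S : ℕ, h ≤ S ∧ S < h + t ∧
          ∀ p : ℤ, c' ≤ p → F^[S] x p = F^[s.1] x p := by
        have hdm := Nat.div_add_mod (h - s.1 + t - 1) t
        have hmd : (h - s.1 + t - 1) % t < t := Nat.mod_lt _ (by omega)
        have e3 : t * ((h - s.1 + t - 1) / t) = 0 ∨ t ≤ t * ((h - s.1 + t - 1) / t) := by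
          rcases Nat.eq_zero_or_pos ((h - s.1 + t - 1) / t) with h0 | h1
          · left; rw [h0, Nat.mul_zero]
          · right
            calc t = t * 1 := by ring
              _ ≤ t * ((h - s.1 + t - 1) / t) := Nat.mul_le_mul_left t h1
        have hk1 : h ≤ s.1 + t * ((h - s.1 + t - 1) / t) := by omega
        have hk2 : s.1 + t * ((h - s.1 + t - 1) / t) < h + t := by omega
        refine ⟨s.1 + t * ((h - s.1 + t - 1) / t), hk1, hk2, ?_⟩
        intro p hp
        exact perm _ s.1 p hp (by omega)
      have win : ∀ (a'' : ℕ) (b : ℤ), a'' < w → -(d : ℤ) ≤ b → b ≤ (h : ℤ) →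
          F^[((S : ℤ) - b).toNat] x (c' + (j : ℤ) + (a'' : ℤ)) =
          F^[((S : ℤ) - b).toNat] x (c' + (j' : ℤ) + (a'' : ℤ)) := by
        intro a'' b ha'' hb1 hb2
        have hu : ((S : ℤ) - b).toNat < t * N + t := by omega
        exact C j j' hWW _ hu a'' ha''
      have keyS := hexp x x (c' + (j : ℤ)) (c' + (j' : ℤ)) S S hS1 hS1 win
      have t1 := eT (c' + (j : ℤ) - 1) (by omega)
      have t2 := eT (c' + (j' : ℤ) - 1) (by omega)
      rw [t1, t2] at keyS
      have e2 : c' + ((j - 1 : ℕ) : ℤ) + (a.1 : ℤ) = c' + (j : ℤ) - 1 := by omega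
      have e2' : c' + ((j' - 1 : ℕ) : ℤ) + (a.1 : ℤ) = c' + (j' : ℤ) - 1 := by omega
      rw [e2, e2']
      exact keyS
    · -- a ≥ 1 : already inside the known window
      have e1 : c' + ((j - 1 : ℕ) : ℤ) + (a.1 : ℤ) = c' + (j : ℤ) + ((a.1 - 1 : ℕ) : ℤ) := by
        omega
      have e1' : c' + ((j' - 1 : ℕ) : ℤ) + (a.1 : ℤ) = c' + (j' : ℤ) + ((a.1 - 1 : ℕ) : ℤ) := by
        omega
      rw [e1, e1']
      exact C j j' hWW s.1 (by omega) (a.1 - 1) (by omega)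
  -- a backward-deterministic map on strips
  obtain ⟨g, hg⟩ : ∃ g : (Fin t → Fin w → A) → (Fin t → Fin w → A),
      ∀ j : ℕ, 1 ≤ j → g (W j) = W (j - 1) := by
    refine ⟨fun v => if hv : ∃ j0, 1 ≤ j0 ∧ W j0 = v then W (hv.choose - 1) else v, ?_⟩
    intro j hj
    have hv : ∃ j0, 1 ≤ j0 ∧ W j0 = W j := ⟨j, hj, rfl⟩
    simp only [dif_pos hv]
    exact L _ j hv.choose_spec.1 hj hv.choose_spec.2
  have hWg : ∀ (m j : ℕ), g^[m] (W (j + m)) = W j := by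
    intro m
    induction m with
    | zero => intro j; rfl
    | succ m ih =>
      intro j
      rw [show j + (m + 1) = (j + m) + 1 by omega, Function.iterate_succ_apply,
        hg ((j + m) + 1) (by omega), Nat.add_sub_cancel]
      exact ih j
  have hmain : ∀ a b : ℕ, a < b → g^[a] = g^[b] → EvPeriodicConfig x := by
    intro a b hab heq
    have hper : ∀ j : ℕ, W (j + (b - a)) = W j := by
      intro j
      have e1 := hWg b j
      have e2 := hWg a (j + (b - a))
      rw [show (j + (b - a)) + a = j + b by omega] at e2
      rw [← e2, ← e1, heq]
    refine ⟨b - a, by omega, c', ?_⟩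
    intro i hi
    have hj := hper (i - c').toNat
    have h2 : F^[(0:ℕ)] x (c' + (((i - c').toNat + (b - a) : ℕ) : ℤ) + ((0:ℕ) : ℤ)) =
        F^[(0:ℕ)] x (c' + (((i - c').toNat : ℕ) : ℤ) + ((0:ℕ) : ℤ)) :=
      congrFun (congrFun hj ⟨0, by omega⟩) ⟨0, by omega⟩
    simp only [Function.iterate_zero, id] at h2
    have e1 : c' + (((i - c').toNat + (b - a) : ℕ) : ℤ) + ((0:ℕ) : ℤ)
        = i + ((b - a : ℕ) : ℤ) := by omega
    have e2 : c' + (((i - c').toNat : ℕ) : ℤ) + ((0:ℕ) : ℤ) = i := by omega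
    rw [e1, e2] at h2
    exact h2
  obtain ⟨a, b, hne, heq⟩ := Finite.exists_ne_map_eq_of_infinite (fun n : ℕ => g^[n])
  rcases hne.lt_or_gt with hab | hab
  · exact hmain a b hab heq
  · exact hmain b a hab heq.symm
end

section
/- Let F: A^Z → A^Z be a CA with memory m that is left expansive with dimensions (e,e,w), and set c = m(e-1). If x ∈ A^Z and t ∈ N are such that frac(x) and frac(F^t(x)) are both p-periodic, then frac_c(F^i(x)) is p-periodic for every 0 ≤ i ≤ t. -/
/-- `F` is a cellular automaton with memory `m` (for some anticipation `n`). -/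
def HasMemory {A : Type*} (F : (ℤ → A) → ℤ → A) (m : ℕ) : Prop :=
  ∃ (n : ℕ) (f : (Fin (m + n + 1) → A) → A),
    ∀ x i, F x i = f fun k => x (i - (m : ℤ) + (k.val : ℤ))

/-- Forward propagation of one-sided periodicity: if `y` is `p`-periodic on positions `≥ 0`,
then `F^[i] y` is `p`-periodic on positions `≥ m·i`. -/
lemma fwd_aux {A : Type*} (F : (ℤ → A) → ℤ → A) (m n : ℕ)
    (f : (Fin (m + n + 1) → A) → A)
    (hf : ∀ x i, F x i = f fun k => x (i - (m : ℤ) + (k.val : ℤ)))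
    (p : ℕ) (y : ℤ → A) (hy : ∀ q : ℤ, 0 ≤ q → y (q + p) = y q) :
    ∀ (i : ℕ) (q : ℤ), ((m * i : ℕ) : ℤ) ≤ q → F^[i] y (q + p) = F^[i] y q := by
  intro i
  induction i with
  | zero =>
    intro q hq
    simp only [Function.iterate_zero, id]
    exact hy q (by simpa using hq)
  | succ i ih =>
    intro q hq
    rw [Function.iterate_succ_apply', hf, hf]
    congr 1
    funext k
    have h1 : q + (p : ℤ) - m + k = (q - m + k) + p := by ring
    rw [h1]
    apply ih
    have hk : (0 : ℤ) ≤ (k.val : ℤ) := Int.ofNat_nonneg _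
    push_cast at hq ⊢
    linarith

/-- Let `F` be a CA with memory `m`, left expansive with dimensions `(e,e,w)`, and set
`c = m(e-1)`. If `frac(x)` and `frac(F^t(x))` are both `p`-periodic, then
`frac_c(F^i(x))` is `p`-periodic for every `0 ≤ i ≤ t`. -/
theorem stmt_11 {A : Type*} (F : (ℤ → A) → ℤ → A) (m : ℕ) (hmem : HasMemory F m)
    (e w : ℕ) (hw : 1 ≤ w) (hexp : LeftExpansive F e e w)
    (x : ℤ → A) (t p : ℕ) (hp : 1 ≤ p)
    (hx : ∀ j : ℕ, x ((j : ℤ) + (p : ℤ)) = x (j : ℤ))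
    (hxt : ∀ j : ℕ, F^[t] x ((j : ℤ) + (p : ℤ)) = F^[t] x (j : ℤ)) :
    ∀ i ≤ t, ∀ j : ℕ,
      F^[i] x ((m * (e - 1) : ℕ) + (j : ℤ) + (p : ℤ)) =
        F^[i] x ((m * (e - 1) : ℕ) + (j : ℤ)) := by
  obtain ⟨n, f, hf⟩ := hmem
  have hy0 : ∀ q : ℤ, 0 ≤ q → x (q + p) = x q := by
    intro q hq
    have := hx q.toNat
    rwa [Int.toNat_of_nonneg hq] at this
  have hyt : ∀ q : ℤ, 0 ≤ q → F^[t] x (q + p) = F^[t] x q := by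
    intro q hq
    have := hxt q.toNat
    rwa [Int.toNat_of_nonneg hq] at this
  have fwd0 := fwd_aux F m n f hf p x hy0
  have fwdt := fwd_aux F m n f hf p (F^[t] x) hyt
  set c : ℕ := m * (e - 1) with hc
  set R : ℕ := max (m * t) c with hR
  have key : ∀ d : ℕ, ∀ i ≤ t, ∀ q : ℤ, (c : ℤ) ≤ q → (R : ℤ) - d ≤ q →
      F^[i] x (q + p) = F^[i] x q := by
    intro d
    induction d with
    | zero =>
      intro i hi q _ hRq
      apply fwd0
      have h1 : m * i ≤ R := le_trans (Nat.mul_le_mul_left m hi) (le_max_left _ _)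
      have h2 : ((m * i : ℕ) : ℤ) ≤ (R : ℤ) := by exact_mod_cast h1
      have h3 : (R : ℤ) ≤ q := by simpa using hRq
      linarith
    | succ d ih =>
      intro i hi q hcq hRq
      by_cases hfw : ((m * i : ℕ) : ℤ) ≤ q
      · exact fwd0 i q hfw
      by_cases hit : i = t
      · subst hit
        exact hyt q (le_trans (Int.ofNat_nonneg c) hcq)
      have hilt : i < t := lt_of_le_of_ne hi hit
      have hie : e ≤ i := by
        by_contra hcon
        push_neg at hcon
        have h1 : m * i ≤ m * (e - 1) := Nat.mul_le_mul_left m (by omega)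
        apply hfw
        have h2 : ((m * i : ℕ) : ℤ) ≤ ((c : ℕ) : ℤ) := by exact_mod_cast h1
        linarith
      have hmain := hexp x x (q + 1 + p) (q + 1) i i hie hie ?_
      · have h1 : q + 1 + (p : ℤ) - 1 = q + p := by ring
        have h2 : q + 1 - 1 = q := by ring
        rwa [h1, h2] at hmain
      · intro a b _ hb1 hb2
        have hbe : (b : ℤ) ≤ (i : ℤ) := le_trans hb2 (by exact_mod_cast hie)
        have hjznn : (0 : ℤ) ≤ (i : ℤ) - b := by linarith
        set J : ℕ := ((i : ℤ) - b).toNat with hJ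
        have hJz : (J : ℤ) = (i : ℤ) - b := Int.toNat_of_nonneg hjznn
        have harr : q + 1 + (p : ℤ) + a = (q + 1 + a) + p := by ring
        rw [harr]
        have ha0 : (0 : ℤ) ≤ (a : ℤ) := Int.ofNat_nonneg _
        by_cases hJt : J ≤ t
        · apply ih J hJt
          · linarith
          · have : (R : ℤ) - ((d + 1 : ℕ) : ℤ) ≤ q := hRq
            push_cast at this ⊢
            linarith
        · push_neg at hJt
          have hJub : (J : ℤ) ≤ (i : ℤ) + e := by rw [hJz]; linarith
          have hJub' : J ≤ i + e := by exact_mod_cast hJub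
          have hse : J - t ≤ e - 1 := by omega
          have hcomp : F^[J] x = F^[J - t] (F^[t] x) := by
            rw [← Function.iterate_add_apply]
            congr 1
            omega
          rw [hcomp]
          apply fwdt
          have h1 : m * (J - t) ≤ c := by
            rw [hc]; exact Nat.mul_le_mul_left m hse
          have h2 : ((m * (J - t) : ℕ) : ℤ) ≤ (c : ℤ) := by exact_mod_cast h1
          linarith
  intro i hi j
  have := key R i hi ((c : ℤ) + j) (le_add_of_nonneg_right (Int.ofNat_nonneg j))
    (by rw [sub_self]; positivity)
  exact this
end

section
/- Let F: A^Z → A^Z be a cellular automaton with radius r and let x ∈ A^Z be such that the sequence (frac(F^t(x)))_{t∈N} has only finitely many limit points in A^N (with respect to the product topology). Then for every w ∈ N there exists i ∈ N such that the trace tr_{[i,i+w]}(x) = (F^t(x)[i..i+w])_{t∈N} is eventually periodic. -/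
/-- `z` is a limit point of the sequence `u` of one-sided sequences, in the product
(prodiscrete) topology on `A^ℕ`: some subsequence of `u` converges to `z`, i.e. agrees
with `z` on arbitrarily long prefixes from some point on. -/
def LimitPoint {A : Type*} (u : ℕ → ℕ → A) (z : ℕ → A) : Prop :=
  ∃ φ : ℕ → ℕ, StrictMono φ ∧ ∀ n : ℕ, ∃ N : ℕ, ∀ k, N ≤ k → ∀ j ≤ n, u (φ k) j = z j

open Filter Topology

/-- Compactness: every sequence in `A^ℕ` with `A` finite has a limit point. -/
lemma aux_exists_limitPoint {A : Type*} [Finite A] [Nonempty A] (v : ℕ → ℕ → A) :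
    ∃ z, LimitPoint v z := by
  letI : TopologicalSpace A := ⊥
  haveI : DiscreteTopology A := ⟨rfl⟩
  obtain ⟨z, -, φ, hφ, hconv⟩ :=
    (isCompact_univ (X := ℕ → A)).tendsto_subseq (x := v) (fun n => Set.mem_univ _)
  refine ⟨z, φ, hφ, fun n => ?_⟩
  have h : ∀ j, ∀ᶠ k in atTop, v (φ k) j = z j := by
    intro j
    have hj : Tendsto (fun k => v (φ k) j) atTop (𝓝 (z j)) := tendsto_pi_nhds.mp hconv j
    rwa [nhds_discrete, tendsto_pure] at hj
  have h2 : ∀ᶠ k in atTop, ∀ j ∈ Finset.range (n + 1), v (φ k) j = z j :=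
    (eventually_all_finset _).mpr fun j _ => h j
  obtain ⟨N, hN⟩ := eventually_atTop.mp h2
  exact ⟨N, fun k hk j hj => hN k hk j (Finset.mem_range.mpr (Nat.lt_succ_of_le hj))⟩

/-- If `F` is a CA of radius `r` and the sequence `(frac(F^t(x)))_t` has only finitely
many limit points in `A^ℕ`, then for every `w` there is an `i ∈ ℕ` such that the trace
of `x` over `[i, i+w]` is eventually periodic. -/
theorem stmt_13 {A : Type*} [Fintype A] (F : (ℤ → A) → ℤ → A)
    (r : ℕ) (hr : HasRadius F r) (x : ℤ → A)
    (hlim : {z : ℕ → A | LimitPoint (fun t j => F^[t] x (j : ℤ)) z}.Finite) :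
    ∀ w : ℕ, ∃ i : ℕ,
      EvPeriodicSeq (fun t => fun k : Fin (w + 1) => F^[t] x ((i : ℤ) + (k.val : ℤ))) := by
  classical
  intro w
  obtain ⟨f, hf⟩ := hr
  haveI : Nonempty A := ⟨x 0⟩
  set u : ℕ → ℕ → A := fun t j => F^[t] x (j : ℤ) with hu
  set Z : Set (ℕ → A) := {z | LimitPoint u z} with hZdef
  have hZfin : Z.Finite := hlim
  obtain ⟨z₀, hz₀⟩ := aux_exists_limitPoint u
  have hz₀Z : z₀ ∈ Z := hz₀
  -- the local rule, on nonnegative coordinates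
  have hloc : ∀ (t a : ℕ), r ≤ a →
      u (t + 1) a = f (fun k => u t (a - r + k.val)) := by
    intro t a ha
    show F^[t+1] x (a : ℤ) = _
    rw [Function.iterate_succ_apply', hf]
    congr 1
    funext k
    show F^[t] x _ = F^[t] x _
    congr 1
    have : ((a - r : ℕ) : ℤ) = (a : ℤ) - r := by
      push_cast [Nat.cast_sub ha]; ring
    push_cast [this]
    ring
  have hstep : ∀ (t t' a a' : ℕ), r ≤ a → r ≤ a' →
      (∀ j ≤ 2 * r, u t (a - r + j) = u t' (a' - r + j)) →
      u (t + 1) a = u (t' + 1) a' := by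
    intro t t' a a' ha ha' hagree
    rw [hloc t a ha, hloc t' a' ha']
    congr 1
    funext k
    exact hagree k.val (Nat.lt_succ_iff.mp k.isLt)
  -- attraction: eventually every configuration agrees with some limit point on long prefixes
  have attract : ∀ n : ℕ, ∃ T : ℕ, ∀ t, T ≤ t → ∃ z ∈ Z, ∀ j ≤ n, u t j = z j := by
    by_contra hcon
    push_neg at hcon
    obtain ⟨n, hn⟩ := hcon
    have hfreq : ∃ᶠ t in atTop, ∀ z ∈ Z, ∃ j ≤ n, u t j ≠ z j := by
      rw [frequently_atTop]
      intro N
      obtain ⟨t, ht, h⟩ := hn N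
      exact ⟨t, ht, h⟩
    obtain ⟨ψ, hψ, hψp⟩ := extraction_of_frequently_atTop hfreq
    obtain ⟨z, φ, hφ, hz⟩ := aux_exists_limitPoint (fun k => u (ψ k))
    have hzZ : z ∈ Z := ⟨ψ ∘ φ, hψ.comp hφ, fun m => hz m⟩
    obtain ⟨N, hN⟩ := hz n
    obtain ⟨j, hj, hne⟩ := hψp (φ N) z hzZ
    exact hne (hN N le_rfl j hj)
  choose T' hT' using attract
  set T : ℕ → ℕ := fun n => (Finset.range (n + 1)).sup T' with hTdef
  have hTmono : Monotone T := fun a b hab =>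
    Finset.sup_mono (Finset.range_subset_range.mpr (by omega))
  have hT'le : ∀ n, T' n ≤ T n := fun n => Finset.le_sup (Finset.self_mem_range_succ n)
  set g : ℕ → ℕ := fun t => Nat.findGreatest (fun n => T n ≤ t) t with hgdef
  have hζex : ∀ t, ∃ z ∈ Z, (T (g t) ≤ t → ∀ j ≤ g t, u t j = z j) := by
    intro t
    by_cases h : T (g t) ≤ t
    · obtain ⟨z, hz1, hz2⟩ := hT' (g t) t (le_trans (hT'le _) h)
      exact ⟨z, hz1, fun _ => hz2⟩
    · exact ⟨z₀, hz₀Z, fun h' => absurd h' h⟩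
  choose ζ hζZ hζagree using hζex
  have hP : ∀ n t, T n ≤ t → n ≤ t → ∀ j ≤ n, u t j = ζ t j := by
    intro n t hTn hnt j hj
    have hng : n ≤ g t := Nat.le_findGreatest hnt hTn
    have hTg : T (g t) ≤ t := Nat.findGreatest_spec (P := fun n => T n ≤ t) hnt hTn
    exact hζagree t hTg j (le_trans hj hng)
  -- pairs of consecutive representatives recur
  set q : ℕ → (ℕ → A) × (ℕ → A) := fun t => (ζ t, ζ (t + 1)) with hqdef
  have hrec : ∃ T2 : ℕ, ∀ t, T2 ≤ t → ∀ N, ∃ s, N ≤ s ∧ ζ s = ζ t ∧ ζ (s + 1) = ζ (t + 1) := by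
    have hQfin : (Set.range q).Finite :=
      Set.Finite.subset (hZfin.prod hZfin) (by rintro _ ⟨t, rfl⟩; exact ⟨hζZ t, hζZ (t + 1)⟩)
    set Bad : Set ((ℕ → A) × (ℕ → A)) := {b | {s | q s = b}.Finite} with hBad
    have hU : (⋃ b ∈ Set.range q ∩ Bad, {s | q s = b}).Finite := by
      apply Set.Finite.biUnion (hQfin.subset Set.inter_subset_left)
      intro b hb
      exact hb.2
    obtain ⟨T2, hT2⟩ := hU.bddAbove
    refine ⟨T2 + 1, fun t ht N => ?_⟩
    have hnotbad : ¬ {s | q s = q t}.Finite := by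
      intro hb
      have hmem : t ∈ ⋃ b ∈ Set.range q ∩ Bad, {s | q s = b} := by
        refine Set.mem_biUnion ⟨⟨t, rfl⟩, hb⟩ rfl
      have := hT2 hmem
      omega
    have hinf : {s | q s = q t}.Infinite := hnotbad
    obtain ⟨s, hs, hlt⟩ := hinf.exists_gt N
    have hpair : q s = q t := hs
    exact ⟨s, le_of_lt hlt, congrArg Prod.fst hpair, congrArg Prod.snd hpair⟩
  -- stabilization of the tail-agreement relation
  have hstab : ∃ s₀ : ℕ, ∀ z ∈ Z, ∀ z' ∈ Z,
      (∀ a, s₀ + r ≤ a → z a = z' a) → ∀ a, s₀ ≤ a → z a = z' a := by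
    set P : ℕ → Finset ((ℕ → A) × (ℕ → A)) :=
      fun s => (hZfin.toFinset ×ˢ hZfin.toFinset).filter
        (fun pr => ∀ a, s ≤ a → pr.1 a = pr.2 a) with hPdef
    have hPmono : ∀ s s', s ≤ s' → P s ⊆ P s' := by
      intro s s' hss pr hpr
      rw [hPdef, Finset.mem_filter] at hpr ⊢
      exact ⟨hpr.1, fun a ha => hpr.2 a (le_trans hss ha)⟩
    set M := (hZfin.toFinset ×ˢ hZfin.toFinset).card with hM
    have hPle : ∀ s, (P s).card ≤ M := fun s =>
      Finset.card_le_card (Finset.filter_subset _ _)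
    have hex : ∃ k : ℕ, (P ((k + 1) * r)).card ≤ (P (k * r)).card := by
      by_contra hc
      push_neg at hc
      have hmono : ∀ k : ℕ, k ≤ (P (k * r)).card := by
        intro k
        induction k with
        | zero => omega
        | succ k ih =>
          have := hc k
          omega
      have := hmono (M + 1)
      have := hPle ((M + 1) * r)
      omega
    obtain ⟨k, hk⟩ := hex
    have heq : P (k * r) = P ((k + 1) * r) :=
      Finset.eq_of_subset_of_card_le (hPmono _ _ (by nlinarith)) hk
    refine ⟨k * r, fun z hz z' hz' hag a ha => ?_⟩
    have hmem : (z, z') ∈ P (k * r + r) := by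
      rw [hPdef, Finset.mem_filter]
      exact ⟨Finset.mem_product.mpr ⟨hZfin.mem_toFinset.mpr hz, hZfin.mem_toFinset.mpr hz'⟩, hag⟩
    have h2 : (z, z') ∈ P (k * r) := by
      rw [heq]
      have : (k + 1) * r = k * r + r := by ring
      rwa [this]
    rw [hPdef, Finset.mem_filter] at h2
    exact h2.2 a ha
  obtain ⟨s₀, hs₀⟩ := hstab
  obtain ⟨T2, hT2⟩ := hrec
  -- one-step determinism of tail classes
  have hdet : ∀ t t', T2 ≤ t → T2 ≤ t' →
      (∀ a, s₀ ≤ a → ζ t a = ζ t' a) → ∀ a, s₀ ≤ a → ζ (t + 1) a = ζ (t' + 1) a := by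
    intro t t' ht ht' hagr
    apply hs₀ _ (hζZ (t + 1)) _ (hζZ (t' + 1))
    intro a ha
    have har : r ≤ a := by omega
    obtain ⟨s, hsN, hs1, hs2⟩ := hT2 t ht (max (T (a + r)) (a + r))
    obtain ⟨s', hs'N, hs'1, hs'2⟩ := hT2 t' ht' (max (T (a + r)) (a + r))
    have hsTn : T (a + r) ≤ s := le_trans (le_max_left _ _) hsN
    have hsn : a + r ≤ s := le_trans (le_max_right _ _) hsN
    have hs'Tn : T (a + r) ≤ s' := le_trans (le_max_left _ _) hs'N
    have hs'n : a + r ≤ s' := le_trans (le_max_right _ _) hs'N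
    have hTa : T a ≤ T (a + r) := hTmono (by omega)
    have e1 : ζ (t + 1) a = u (s + 1) a := by
      rw [← hs2]
      exact (hP a (s + 1) (by omega) (by omega) a le_rfl).symm
    have e3 : ζ (t' + 1) a = u (s' + 1) a := by
      rw [← hs'2]
      exact (hP a (s' + 1) (by omega) (by omega) a le_rfl).symm
    have e2 : u (s + 1) a = u (s' + 1) a := by
      apply hstep s s' a a har har
      intro j hj
      have h1 : a - r + j ≤ a + r := by omega
      calc u s (a - r + j) = ζ s (a - r + j) := hP (a + r) s hsTn hsn _ h1
        _ = ζ t (a - r + j) := by rw [hs1]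
        _ = ζ t' (a - r + j) := hagr _ (by omega)
        _ = ζ s' (a - r + j) := by rw [hs'1]
        _ = u s' (a - r + j) := (hP (a + r) s' hs'Tn hs'n _ h1).symm
    rw [e1, e2, ← e3]
  -- pigeonhole: two equal representatives after T2
  have hpig : ∃ t₁ t₂, T2 ≤ t₁ ∧ t₁ < t₂ ∧ ζ t₁ = ζ t₂ := by
    have hmaps : ∀ t ∈ Finset.Icc T2 (T2 + hZfin.toFinset.card), ζ t ∈ hZfin.toFinset :=
      fun t _ => hZfin.mem_toFinset.mpr (hζZ t)
    have hcard : hZfin.toFinset.card < (Finset.Icc T2 (T2 + hZfin.toFinset.card)).card := by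
      rw [Nat.card_Icc]; omega
    obtain ⟨t₁, h1, t₂, h2, hne, heq⟩ :=
      Finset.exists_ne_map_eq_of_card_lt_of_maps_to hcard hmaps
    rcases lt_or_gt_of_ne hne with h | h
    · exact ⟨t₁, t₂, (Finset.mem_Icc.mp h1).1, h, heq⟩
    · exact ⟨t₂, t₁, (Finset.mem_Icc.mp h2).1, h, heq.symm⟩
  obtain ⟨t₁, t₂, ht₁, hlt, heq⟩ := hpig
  have hper : ∀ k, ∀ a, s₀ ≤ a → ζ (t₁ + k) a = ζ (t₂ + k) a := by
    intro k
    induction k with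
    | zero => intro a _; simp [heq]
    | succ k ih =>
      intro a ha
      have h1 : t₁ + (k + 1) = (t₁ + k) + 1 := by ring
      have h2 : t₂ + (k + 1) = (t₂ + k) + 1 := by ring
      rw [h1, h2]
      exact hdet (t₁ + k) (t₂ + k) (by omega) (by omega) ih a ha
  refine ⟨s₀, t₂ - t₁, by omega, max (max (T (s₀ + w)) (s₀ + w)) t₁, fun t ht => ?_⟩
  funext k
  have hk : s₀ + k.val ≤ s₀ + w := by have := k.isLt; omega
  have hTt : T (s₀ + w) ≤ t := le_trans (le_max_left _ _) (le_trans (le_max_left _ _) ht)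
  have hwt : s₀ + w ≤ t := le_trans (le_max_right _ _) (le_trans (le_max_left _ _) ht)
  have ht₁t : t₁ ≤ t := le_trans (le_max_right _ _) ht
  have hcast : ∀ m : ℕ, F^[m] x ((s₀ : ℤ) + (k.val : ℤ)) = u m (s₀ + k.val) := by
    intro m
    show _ = F^[m] x _
    norm_cast
  show F^[t + (t₂ - t₁)] x ((s₀ : ℤ) + (k.val : ℤ)) = F^[t] x ((s₀ : ℤ) + (k.val : ℤ))
  rw [hcast, hcast]
  have hζt : ζ t (s₀ + k.val) = ζ (t + (t₂ - t₁)) (s₀ + k.val) := by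
    have := hper (t - t₁) (s₀ + k.val) (by omega)
    have e1 : t₁ + (t - t₁) = t := by omega
    have e2 : t₂ + (t - t₁) = t + (t₂ - t₁) := by omega
    rwa [e1, e2] at this
  calc u (t + (t₂ - t₁)) (s₀ + k.val)
      = ζ (t + (t₂ - t₁)) (s₀ + k.val) := hP (s₀ + w) _ (by omega) (by omega) _ hk
    _ = ζ t (s₀ + k.val) := hζt.symm
    _ = u t (s₀ + k.val) := (hP (s₀ + w) t hTt hwt _ hk).symm
end

section
/- If F: A^Z → A^Z is a rapidly left expansive cellular automaton and x is a number-like configuration, then the sequence (frac(F^t(x)))_{t∈N} has infinitely many limit points in A^N with respect to the product topology. -/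
open Filter


section AuxStmt14
variable {A : Type*} [Zero A] {F : (ℤ → A) → ℤ → A} {m n : ℕ} {f : (Fin (m + n + 1) → A) → A}

lemma nl_bddBelow {y : ℤ → A} (hy : NumberLike y) : BddBelow {N : ℤ | y N ≠ 0} := by
  obtain ⟨N, hN⟩ := hy.2
  exact ⟨N, fun i hi => le_of_not_gt fun h => hi (hN i h)⟩

lemma lbound_mem {y : ℤ → A} (hy : NumberLike y) : y (lbound y) ≠ 0 :=
  Int.csInf_mem hy.1 (nl_bddBelow hy)

lemma lbound_le {y : ℤ → A} (hy : NumberLike y) {i : ℤ} (h : y i ≠ 0) : lbound y ≤ i :=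
  csInf_le (nl_bddBelow hy) h

lemma lbound_zero_below {y : ℤ → A} (hy : NumberLike y) {i : ℤ} (h : i < lbound y) : y i = 0 := by
  by_contra hne; exact absurd (lbound_le hy hne) (not_le.2 h)

lemma numberlike_shift {y : ℤ → A} (hy : NumberLike y) (k : ℤ) :
    NumberLike (fun i => y (i + k)) := by
  obtain ⟨⟨i, hi⟩, N, hN⟩ := hy
  exact ⟨⟨i - k, by simpa using hi⟩, N - k, fun j hj => hN _ (by omega)⟩

lemma lbound_shift {y : ℤ → A} (hy : NumberLike y) (k : ℤ) :
    lbound (fun i => y (i + k)) = lbound y - k := by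
  have h1 : lbound (fun i => y (i + k)) ≤ lbound y - k :=
    lbound_le (numberlike_shift hy k) (by simpa using lbound_mem hy)
  have h2 : lbound y ≤ lbound (fun i => y (i + k)) + k :=
    lbound_le hy (lbound_mem (numberlike_shift hy k))
  omega

lemma ca_loc (hf : ∀ x i, F x i = f fun k => x (i - (m : ℤ) + (k.val : ℤ)))
    {x₁ x₂ : ℤ → A} {i : ℤ} (h : ∀ j, i - m ≤ j → j ≤ i + n → x₁ j = x₂ j) :
    F x₁ i = F x₂ i := by
  rw [hf, hf]
  congr 1
  funext k
  exact h _ (by omega) (by have := k.2; omega)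

lemma ca_zero_of_zero (hf : ∀ x i, F x i = f fun k => x (i - (m : ℤ) + (k.val : ℤ)))
    (hz : F (fun _ => 0) = fun _ => 0)
    {y : ℤ → A} {N : ℤ} (h : ∀ j, j < N → y j = 0) {i : ℤ} (hi : i < N - n) : F y i = 0 := by
  have : F y i = F (fun _ => 0) i := ca_loc hf (fun j _ h2 => h j (by omega))
  rw [this, hz]

lemma ca_iter_zero (hf : ∀ x i, F x i = f fun k => x (i - (m : ℤ) + (k.val : ℤ)))
    (hz : F (fun _ => 0) = fun _ => 0)
    {y : ℤ → A} {N : ℤ} (h : ∀ j, j < N → y j = 0) :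
    ∀ t : ℕ, ∀ i : ℤ, i < N - t * n → F^[t] y i = 0 := by
  intro t
  induction t with
  | zero => intro i hi; exact h i (by simpa using hi)
  | succ t ih =>
    intro i hi
    rw [Function.iterate_succ_apply']
    exact ca_zero_of_zero hf hz (N := N - t * n) ih (by push_cast at hi ⊢; rw [add_one_mul] at hi; omega)

lemma ca_shift (hf : ∀ x i, F x i = f fun k => x (i - (m : ℤ) + (k.val : ℤ)))
    (k : ℤ) (y : ℤ → A) : F (fun i => y (i + k)) = fun i => F y (i + k) := by
  funext i
  rw [hf, hf]
  congr 1
  funext k'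
  congr 1
  ring

lemma ca_iter_shift (hf : ∀ x i, F x i = f fun k => x (i - (m : ℤ) + (k.val : ℤ)))
    (k : ℤ) (y : ℤ → A) (t : ℕ) : F^[t] (fun i => y (i + k)) = fun i => F^[t] y (i + k) := by
  induction t with
  | zero => simp
  | succ t ih => rw [Function.iterate_succ_apply', ih, ca_shift hf, Function.iterate_succ_apply']

lemma numberlike_iter (hf : ∀ x i, F x i = f fun k => x (i - (m : ℤ) + (k.val : ℤ)))
    (hsp : LeftSpreading F) {y : ℤ → A} (hy : NumberLike y) (t : ℕ) :
    NumberLike (F^[t] y) := by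
  induction t with
  | zero => simpa using hy
  | succ t ih =>
    obtain ⟨N, hN⟩ := hy.2
    constructor
    · -- nonzero
      by_contra hall
      push_neg at hall
      have hiter : ∀ s : ℕ, 1 ≤ s → F^[s] (F^[t] y) = fun _ => 0 := by
        intro s hs
        induction s with
        | zero => omega
        | succ s ihs =>
          rcases Nat.eq_zero_or_pos s with h0 | hpos
          · subst h0
            funext i
            have h2 := hall i
            rw [Function.iterate_succ_apply'] at h2
            simpa using h2
          · rw [Function.iterate_succ_apply', ihs hpos, hsp.1]
      set yt := F^[t] y with hyt
      set k := lbound yt - lbound (fun _ => (0 : A)) with hk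
      obtain ⟨s, hs1, hs2⟩ := hsp.2 (fun i => yt (i + k)) (numberlike_shift ih k)
      rw [ca_iter_shift hf, hiter s hs1] at hs2
      rw [lbound_shift ih] at hs2
      simp only [hk] at hs2
      omega
    · exact ⟨N - t * n - n, fun i hi => by
        rw [Function.iterate_succ_apply']
        exact ca_zero_of_zero hf hsp.1 (N := N - t * n) (ca_iter_zero hf hsp.1 hN t) (by omega)⟩

lemma lbound_iter_ge (hf : ∀ x i, F x i = f fun k => x (i - (m : ℤ) + (k.val : ℤ)))
    (hsp : LeftSpreading F) {y : ℤ → A} (hy : NumberLike y) (t : ℕ) :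
    lbound y - t * n ≤ lbound (F^[t] y) := by
  by_contra hlt
  push_neg at hlt
  exact lbound_mem (numberlike_iter hf hsp hy t)
    (ca_iter_zero hf hsp.1 (fun j hj => lbound_zero_below hy hj) t _ hlt)

lemma L_tail_unbounded (hf : ∀ x i, F x i = f fun k => x (i - (m : ℤ) + (k.val : ℤ)))
    (hsp : LeftSpreading F) {y : ℤ → A} (hy : NumberLike y) (t₁ : ℕ) (B : ℤ) :
    ∃ t : ℕ, t₁ ≤ t ∧ lbound (F^[t] y) < B := by
  have key : ∀ k : ℕ, ∀ t₁ : ℕ, ∃ t, t₁ ≤ t ∧ lbound (F^[t] y) ≤ lbound (F^[t₁] y) - k := by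
    intro k
    induction k with
    | zero => intro t₁; exact ⟨t₁, le_refl _, by simp⟩
    | succ k ih =>
      intro t₁
      obtain ⟨t, ht1, ht2⟩ := ih t₁
      obtain ⟨s, hs1, hs2⟩ := hsp.2 (F^[t] y) (numberlike_iter hf hsp hy t)
      rw [← Function.iterate_add_apply] at hs2
      exact ⟨s + t, by omega, by push_cast; omega⟩
  obtain ⟨t, ht1, ht2⟩ := key ((lbound (F^[t₁] y) - B).toNat + 1) t₁
  refine ⟨t, ht1, ?_⟩
  have := Int.self_le_toNat (lbound (F^[t₁] y) - B)
  push_cast at ht2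
  omega

lemma speed_rat (hf : ∀ x i, F x i = f fun k => x (i - (m : ℤ) + (k.val : ℤ)))
    (hsp : LeftSpreading F) {h : ℕ} (hs : spreadingSpeed F * (h : ℝ) < 1)
    {x : ℤ → A} (hx : NumberLike x) :
    ∃ q r : ℕ, 1 ≤ r ∧ h * q < r ∧ ∃ T : ℕ, ∀ t : ℕ, T ≤ t →
      (r : ℤ) * (-(lbound (F^[t] x))) ≤ (q : ℤ) * t := by
  -- eventual crude bound for any number-like y
  have hev : ∀ y : ℤ → A, NumberLike y → ∀ᶠ t : ℕ in atTop,
      -((lbound (F^[t] y) : ℝ)) / (t : ℝ) ≤ (n : ℝ) + 1 := by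
    intro y hy
    rw [eventually_atTop]
    refine ⟨max 1 (lbound y).natAbs, fun t ht => ?_⟩
    have ht1 : 1 ≤ t := le_of_max_le_left ht
    have ht2 : (lbound y).natAbs ≤ t := le_of_max_le_right ht
    have hlb : lbound y - t * n ≤ lbound (F^[t] y) := lbound_iter_ge hf hsp hy t
    have htpos : (0 : ℝ) < (t : ℝ) := by exact_mod_cast ht1
    rw [div_le_iff₀ htpos]
    have hz1 : -(lbound (F^[t] y)) ≤ (t : ℤ) * n + t := by
      have h3 : -(lbound y) ≤ ((lbound y).natAbs : ℤ) := by
        rcases Int.natAbs_eq (lbound y) with he | he <;> omega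
      have h4 : ((lbound y).natAbs : ℤ) ≤ (t : ℤ) := by exact_mod_cast ht2
      omega
    calc -((lbound (F^[t] y) : ℝ)) ≤ ((t : ℤ) * n + t : ℤ) := by exact_mod_cast hz1
      _ = (t : ℝ) * n + t := by push_cast; ring
      _ = ((n : ℝ) + 1) * t := by ring
  set u : ℕ → ℝ := fun t => -((lbound (F^[t] x) : ℝ)) / (t : ℝ) with hu
  have hlimsup_le : ∀ y : {x : ℤ → A // NumberLike x},
      limsup (fun t : ℕ => -((lbound (F^[t] y.1) : ℝ)) / (t : ℝ)) atTop ≤ (n : ℝ) + 1 := by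
    intro y
    rw [limsup_eq]
    by_cases hb : BddBelow {a : ℝ | ∀ᶠ t : ℕ in atTop, -((lbound (F^[t] y.1) : ℝ)) / (t : ℝ) ≤ a}
    · exact csInf_le hb (hev y.1 y.2)
    · rw [Real.sInf_of_not_bddBelow hb]; positivity
  have hbdd : BddAbove (Set.range fun y : {x : ℤ → A // NumberLike x} =>
      limsup (fun t : ℕ => -((lbound (F^[t] y.1) : ℝ)) / (t : ℝ)) atTop) := by
    refine ⟨(n : ℝ) + 1, ?_⟩
    rintro a ⟨y, rfl⟩
    exact hlimsup_le y
  have hub : limsup u atTop ≤ spreadingSpeed F := le_ciSup hbdd ⟨x, hx⟩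
  have hbound : IsBoundedUnder (· ≤ ·) atTop u := ⟨(n : ℝ) + 1, eventually_map.2 (hev x hx)⟩
  obtain ⟨c, hc0, hc1, hch⟩ : ∃ c : ℚ, 0 ≤ c ∧ spreadingSpeed F < (c : ℝ) ∧ (c : ℝ) * h < 1 := by
    rcases Nat.eq_zero_or_pos h with h0 | hpos
    · obtain ⟨c', hc'⟩ := exists_rat_gt (spreadingSpeed F)
      refine ⟨max c' 0, le_max_right _ _, lt_of_lt_of_le hc' (by exact_mod_cast le_max_left c' 0), by simp [h0]⟩
    · have hhpos : (0 : ℝ) < (h : ℝ) := by exact_mod_cast hpos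
      have hsh : spreadingSpeed F < 1 / (h : ℝ) := (lt_div_iff₀ hhpos).2 hs
      obtain ⟨c', hc1', hc2'⟩ := exists_rat_btwn hsh
      refine ⟨max c' 0, le_max_right _ _, lt_of_lt_of_le hc1' (by exact_mod_cast le_max_left c' 0), ?_⟩
      have hlt : ((max c' 0 : ℚ) : ℝ) < 1 / (h : ℝ) := by
        rcases max_cases c' 0 with ⟨he, _⟩ | ⟨he, _⟩
        · rw [he]; exact_mod_cast hc2'
        · rw [he]; push_cast; positivity
      calc ((max c' 0 : ℚ) : ℝ) * h < (1 / (h : ℝ)) * h := by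
            exact mul_lt_mul_of_pos_right hlt hhpos
        _ = 1 := by field_simp
  have hlt : limsup u atTop < (c : ℝ) := lt_of_le_of_lt hub hc1
  have hevlt : ∀ᶠ t : ℕ in atTop, u t < (c : ℝ) := eventually_lt_of_limsup_lt hlt hbound
  obtain ⟨T, hT⟩ := eventually_atTop.1 hevlt
  refine ⟨c.num.toNat, c.den, c.pos, ?_, max T 1, ?_⟩
  · have hnum : ((c.num.toNat : ℕ) : ℝ) = (c.num : ℝ) := by
      exact_mod_cast Int.toNat_of_nonneg (Rat.num_nonneg.2 hc0)
    have hcast : (c : ℝ) = (c.num : ℝ) / (c.den : ℝ) := by exact_mod_cast (Rat.num_div_den c).symm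
    have hdpos : (0 : ℝ) < (c.den : ℝ) := by exact_mod_cast c.pos
    have hn2 : (c.num : ℝ) * h < c.den := by
      rw [hcast] at hch
      have := mul_lt_mul_of_pos_right hch hdpos
      calc (c.num : ℝ) * h = ((c.num : ℝ) / c.den * h) * c.den := by field_simp
        _ < 1 * c.den := this
        _ = c.den := one_mul _
    have : ((h : ℕ) : ℝ) * ((c.num.toNat : ℕ) : ℝ) < ((c.den : ℕ) : ℝ) := by
      rw [hnum]; linarith
    exact_mod_cast this
  · intro t ht
    have ht1 : 1 ≤ t := le_of_max_le_right ht
    have htT : T ≤ t := le_of_max_le_left ht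
    have hut : u t < (c : ℝ) := hT t htT
    have htpos : (0 : ℝ) < (t : ℝ) := by exact_mod_cast ht1
    rw [hu] at hut
    simp only [] at hut
    rw [div_lt_iff₀ htpos] at hut
    have hnum : ((c.num.toNat : ℕ) : ℝ) = (c.num : ℝ) := by
      exact_mod_cast Int.toNat_of_nonneg (Rat.num_nonneg.2 hc0)
    have hcast : (c : ℝ) = (c.num : ℝ) / (c.den : ℝ) := by exact_mod_cast (Rat.num_div_den c).symm
    have hdpos : (0 : ℝ) < (c.den : ℝ) := by exact_mod_cast c.pos
    have hdc : (c.den : ℝ) * (c : ℝ) = (c.num : ℝ) := by rw [hcast]; field_simp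
    have hfin : ((c.den : ℕ) : ℝ) * (-((lbound (F^[t] x) : ℝ))) < ((c.num.toNat : ℕ) : ℝ) * (t : ℝ) := by
      rw [hnum, ← hdc]
      calc (c.den : ℝ) * (-((lbound (F^[t] x) : ℝ))) < (c.den : ℝ) * ((c : ℝ) * t) :=
            mul_lt_mul_of_pos_left hut hdpos
        _ = (c.den : ℝ) * (c : ℝ) * t := by ring
    have : ((c.den : ℕ) : ℤ) * (-(lbound (F^[t] x))) < ((c.num.toNat : ℕ) : ℤ) * (t : ℤ) := by
      exact_mod_cast hfin
    omega

end AuxStmt14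
lemma exists_limitPoint_subseq {A : Type*} [Finite A] [Nonempty A] (u : ℕ → ℕ → A)
    (S : Set ℕ) (hS : S.Infinite) :
    ∃ z, LimitPoint u z ∧ ∀ P : ℕ, ∃ t ∈ S, ∀ j ≤ P, u t j = z j := by
  classical
  letI : TopologicalSpace A := ⊥
  haveI : DiscreteTopology A := ⟨rfl⟩
  have hSmem : ∀ k, Nat.nth (· ∈ S) k ∈ S := fun k => Nat.nth_mem_of_infinite hS k
  have hSmono : StrictMono (Nat.nth (· ∈ S)) := Nat.nth_strictMono hS
  obtain ⟨z, -, φ, hφ, hconv⟩ :=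
    (isCompact_univ (X := ℕ → A)).tendsto_subseq
      (x := fun k => u (Nat.nth (· ∈ S) k)) (fun k => Set.mem_univ _)
  have hcoord : ∀ j : ℕ, ∃ N, ∀ k, N ≤ k → u (Nat.nth (· ∈ S) (φ k)) j = z j := by
    intro j
    have h1 : Tendsto (fun k => u (Nat.nth (· ∈ S) (φ k)) j) atTop (nhds (z j)) :=
      (tendsto_pi_nhds.1 hconv) j
    have h2 : ∀ᶠ k in atTop, u (Nat.nth (· ∈ S) (φ k)) j = z j := by
      have : {z j} ∈ nhds (z j) := by
        simp [isOpen_discrete ({z j} : Set A) |>.mem_nhds rfl]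
      simpa using h1 this
    exact eventually_atTop.1 h2
  choose Nj hNj using hcoord
  have key : ∀ n : ℕ, ∃ N, ∀ k, N ≤ k → ∀ j ≤ n, u (Nat.nth (· ∈ S) (φ k)) j = z j := by
    intro n
    refine ⟨(Finset.range (n + 1)).sup Nj, fun k hk j hj => hNj j k (le_trans ?_ hk)⟩
    exact Finset.le_sup (Finset.mem_range.2 (by omega))
  refine ⟨z, ⟨fun k => Nat.nth (· ∈ S) (φ k), hSmono.comp hφ, key⟩, ?_⟩
  intro P
  obtain ⟨N, hN⟩ := key P
  exact ⟨Nat.nth (· ∈ S) (φ N), hSmem _, hN N (le_refl _) ⟩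

/-- If `F` is a rapidly left expansive CA and `x` is number-like, then the sequence
`(frac(F^t(x)))_t` has infinitely many limit points in `A^ℕ`. -/
theorem stmt_14 {A : Type*} [Zero A] [Fintype A] (F : (ℤ → A) → ℤ → A) (hF : IsCA F)
    (w : ℕ) (hw : 1 ≤ w) (hre : RapidlyLeftExpansive F w)
    (x : ℤ → A) (hx : NumberLike x) :
    {z : ℕ → A | LimitPoint (fun t j => F^[t] x (j : ℤ)) z}.Infinite := by
  classical
  haveI : Finite A := Finite.of_fintype A
  haveI : Nonempty A := ⟨0⟩
  obtain ⟨m, n, f, hf⟩ := hF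
  obtain ⟨h, d, hexp, hsp, hs⟩ := hre
  by_contra hinf
  rw [Set.not_infinite] at hinf
  set u : ℕ → ℕ → A := fun t j => F^[t] x (j : ℤ) with hu
  have hu' : ∀ t j, u t j = F^[t] x (j : ℤ) := fun t j => rfl
  set ΛF : Finset (ℕ → A) := hinf.toFinset with hΛF
  have hmemΛ : ∀ z, z ∈ ΛF ↔ LimitPoint u z := fun z => hinf.mem_toFinset
  -- the eventually-equal relation
  set rel : (ℕ → A) → (ℕ → A) → Prop := fun z z' => ∃ J : ℕ, ∀ j, J ≤ j → z j = z' j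
    with hrel_def
  have hrel_refl : ∀ z, rel z z := fun z => ⟨0, fun j _ => rfl⟩
  -- uniform threshold J₁ for eventually-equal pairs
  have hgex : ∀ z z' : ℕ → A, ∃ J : ℕ, rel z z' → ∀ j, J ≤ j → z j = z' j := by
    intro z z'
    by_cases hrel : rel z z'
    · exact ⟨hrel.choose, fun _ j hj => hrel.choose_spec j hj⟩
    · exact ⟨0, fun hr => absurd hr hrel⟩
  choose g hg using hgex
  set J₁ : ℕ := ΛF.sup fun z => ΛF.sup (g z) with hJ₁def
  have hJ₁ : ∀ z ∈ ΛF, ∀ z' ∈ ΛF, rel z z' → ∀ j, J₁ ≤ j → z j = z' j := by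
    intro z hz z' hz' hr j hj
    have b1 : g z z' ≤ ΛF.sup (g z) := Finset.le_sup hz'
    have b2 : ΛF.sup (g z) ≤ J₁ := Finset.le_sup (f := fun z => ΛF.sup (g z)) hz
    exact hg z z' hr j (by omega)
  -- uniform witness bound Q for non-eventually-equal pairs
  have hQex : ∀ z z' : ℕ → A, ∃ Jq : ℕ, ¬ rel z z' → (J₁ + m ≤ Jq ∧ z Jq ≠ z' Jq) := by
    intro z z'
    by_cases hrel : rel z z'
    · exact ⟨0, fun hr => absurd hrel hr⟩
    · have hex : ∃ j, (J₁ + m ≤ j ∧ z j ≠ z' j) := by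
        by_contra hno
        push_neg at hno
        exact hrel ⟨J₁ + m, hno⟩
      exact ⟨hex.choose, fun _ => hex.choose_spec⟩
  choose gq hgq using hQex
  set Q : ℕ := ΛF.sup fun z => ΛF.sup (gq z) with hQdef
  have hQ : ∀ z ∈ ΛF, ∀ z' ∈ ΛF, ¬ rel z z' → ∃ j, J₁ + m ≤ j ∧ j ≤ Q ∧ z j ≠ z' j := by
    intro z hz z' hz' hr
    have b1 : gq z z' ≤ ΛF.sup (gq z) := Finset.le_sup hz'
    have b2 : ΛF.sup (gq z) ≤ Q := Finset.le_sup (f := fun z => ΛF.sup (gq z)) hz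
    exact ⟨gq z z', (hgq z z' hr).1, by omega, (hgq z z' hr).2⟩
  set P : ℕ := Q + n + J₁ + w with hPdef
  -- the orbit eventually stays close to the (finitely many) limit points
  have hap : ∃ T : ℕ, ∀ t, T ≤ t → ∃ z ∈ ΛF, ∀ j ≤ P, u t j = z j := by
    by_contra hnot
    push_neg at hnot
    set S : Set ℕ := {t | ∀ z ∈ ΛF, ∃ j ≤ P, u t j ≠ z j} with hSdef
    have hSinf : S.Infinite := by
      apply Set.infinite_of_not_bddAbove
      rintro ⟨T, hT⟩
      obtain ⟨t, ht1, ht2⟩ := hnot (T + 1)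
      have : t ∈ S := by
        intro z hz
        obtain ⟨j, hj1, hj2⟩ := ht2 z hz
        exact ⟨j, hj1, hj2⟩
      have := hT this
      omega
    obtain ⟨z, hz, hagr⟩ := exists_limitPoint_subseq u S hSinf
    obtain ⟨t, htS, htz⟩ := hagr P
    obtain ⟨j, hj1, hj2⟩ := htS z ((hmemΛ z).2 hz)
    exact hj2 (htz j hj1)
  obtain ⟨T, hT⟩ := hap
  -- the coloring
  set c : ℕ → (ℕ → A) := fun t =>
    if hex : ∃ z ∈ ΛF, ∀ j ≤ P, u t j = z j then hex.choose else fun _ => 0 with hcdef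
  have hc : ∀ t, T ≤ t → c t ∈ ΛF ∧ ∀ j ≤ P, u t j = c t j := by
    intro t ht
    have hex := hT t ht
    have hceq : c t = hex.choose := dif_pos hex
    refine ⟨?_, fun j hj => ?_⟩
    · rw [hceq]; exact hex.choose_spec.1
    · rw [hceq]; exact hex.choose_spec.2 j hj
  -- local rule on the one-sided traces
  have hloc : ∀ t j, m ≤ j → u (t + 1) j = f fun k => u t (j - m + k.val) := by
    intro t j hj
    rw [hu', Function.iterate_succ_apply', hf]
    congr 1
    funext k
    rw [hu']
    have e : ((j - m + k.val : ℕ) : ℤ) = (j : ℤ) - m + k.val := by omega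
    rw [e]
  -- transition respects the eventually-equal relation
  have htrans : ∀ t t', T ≤ t → T ≤ t' → rel (c t) (c t') → rel (c (t + 1)) (c (t' + 1)) := by
    intro t t' ht ht' hr
    by_contra hnr
    obtain ⟨j, hj1, hj2, hj3⟩ :=
      hQ _ (hc (t + 1) (by omega)).1 _ (hc (t' + 1) (by omega)).1 hnr
    have hagree1 : ∀ j', J₁ ≤ j' → c t j' = c t' j' :=
      hJ₁ _ (hc t ht).1 _ (hc t' ht').1 hr
    apply hj3
    have e1 : c (t + 1) j = u (t + 1) j := ((hc (t + 1) (by omega)).2 j (by omega)).symm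
    have e2 : c (t' + 1) j = u (t' + 1) j := ((hc (t' + 1) (by omega)).2 j (by omega)).symm
    rw [e1, e2, hloc t j (by omega), hloc t' j (by omega)]
    congr 1
    funext k
    have hk := k.2
    have i1 : u t (j - m + k.val) = c t (j - m + k.val) :=
      (hc t ht).2 _ (by omega)
    have i2 : u t' (j - m + k.val) = c t' (j - m + k.val) :=
      (hc t' ht').2 _ (by omega)
    rw [i1, i2, hagree1 _ (by omega)]
  -- find a repetition
  obtain ⟨t₀, p, ht₀T, hp1, hrep⟩ :
      ∃ t₀ p, T ≤ t₀ ∧ 1 ≤ p ∧ c t₀ = c (t₀ + p) := by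
    obtain ⟨i, hi, i', hi', hne, heq⟩ :=
      Finset.exists_ne_map_eq_of_card_lt_of_maps_to
        (s := Finset.range (ΛF.card + 1)) (t := ΛF)
        (by simp) (fun i _ => (hc (T + i) (by omega)).1)
    rcases lt_or_gt_of_ne hne with hlt | hlt
    · exact ⟨T + i, i' - i, by omega, by omega,
        by rw [show T + i + (i' - i) = T + i' from by omega]; exact heq⟩
    · exact ⟨T + i', i - i', by omega, by omega,
        by rw [show T + i' + (i - i') = T + i from by omega]; exact heq.symm⟩
  -- the coloring is p-periodic (up to tail equality) from t₀ on
  have hper : ∀ s : ℕ, rel (c (t₀ + s)) (c (t₀ + s + p)) := by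
    intro s
    induction s with
    | zero => exact ⟨0, fun j _ => by rw [Nat.add_zero, hrep]⟩
    | succ s ih =>
      have H := htrans (t₀ + s) (t₀ + s + p) (by omega) (by omega) ih
      have e1 : t₀ + s + 1 = t₀ + (s + 1) := by omega
      have e2 : t₀ + s + p + 1 = t₀ + (s + 1) + p := by omega
      rwa [e1, e2] at H
  -- window agreement, for all times from t₀ on
  have hwin : ∀ t, t₀ ≤ t → ∀ j, J₁ ≤ j → j ≤ P → u t j = u (t + p) j := by
    intro t ht j hj1 hj2
    have hrel1 : rel (c t) (c (t + p)) := by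
      have := hper (t - t₀)
      rwa [show t₀ + (t - t₀) = t from by omega] at this
    rw [(hc t (by omega)).2 j hj2,
      hJ₁ _ (hc t (by omega)).1 _ (hc (t + p) (by omega)).1 hrel1 j hj1,
      ← (hc (t + p) (by omega)).2 j hj2]
  -- the expansivity staircase
  have hstair : ∀ N : ℕ, ∀ t : ℕ, t₀ + N * h ≤ t →
      ∀ i : ℤ, (J₁ : ℤ) - N ≤ i → i ≤ (P : ℤ) → F^[t] x i = F^[t + p] x i := by
    intro N
    induction N with
    | zero =>
      intro t ht i hi1 hi2
      have hj : J₁ ≤ i.toNat ∧ i.toNat ≤ P ∧ (i.toNat : ℤ) = i := by omega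
      have := hwin t (by omega) i.toNat hj.1 hj.2.1
      rw [hu', hu', hj.2.2] at this
      exact this
    | succ N ih =>
      intro t ht i hi1 hi2
      have hmul : (N + 1) * h = N * h + h := by ring
      by_cases hge : (J₁ : ℤ) - N ≤ i
      · exact ih t (by omega) i hge hi2
      · have hieq : i = (J₁ : ℤ) - N - 1 := by push_cast at hi1; omega
        have hht : h ≤ t := by omega
        have hhtz : (h : ℤ) ≤ (t : ℤ) := by exact_mod_cast hht
        have hcast : ((t₀ + N * h + h : ℕ) : ℤ) ≤ (t : ℤ) := by
          exact_mod_cast (show t₀ + N * h + h ≤ t from by omega)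
        rw [hieq]
        refine hexp x x ((J₁ : ℤ) - N) ((J₁ : ℤ) - N) t (t + p) hht (by omega) ?_
        intro a b ha hb1 hb2
        set s : ℕ := ((t : ℤ) - b).toNat with hsdef
        have hs : (s : ℤ) = (t : ℤ) - b := Int.toNat_of_nonneg (by omega)
        have h2 : (((t + p : ℕ) : ℤ) - b).toNat = s + p := by omega
        rw [h2]
        have hsge : t₀ + N * h ≤ s := by omega
        apply ih s hsge
        · omega
        · have haz : (a : ℤ) < (w : ℤ) := by exact_mod_cast ha
          have hPw : (J₁ : ℤ) + (w : ℤ) ≤ (P : ℤ) := by exact_mod_cast (show J₁ + w ≤ P from by omega)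
          omega
  -- number-like preservation and the left edge
  have hnum : ∀ t : ℕ, NumberLike (F^[t] x) := numberlike_iter hf hsp hx
  obtain ⟨q, r, hr, hqr, T₃, hT₃⟩ := speed_rat hf hsp hs hx
  set L : ℕ → ℤ := fun t => lbound (F^[t] x) with hLdef
  set T₄ : ℕ := max (max T₃ t₀) (r * (p + t₀ + h * J₁ + h)) with hT₄def
  -- deep agreement beyond the left edge
  have hAg : ∀ t, T₄ ≤ t →
      (∀ i : ℤ, -(((q * (t + p)) / r + 1 : ℕ) : ℤ) ≤ i → i ≤ (P : ℤ) →
        F^[t] x i = F^[t + p] x i) ∧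
      -(((q * (t + p)) / r : ℕ) : ℤ) ≤ L t ∧ -(((q * (t + p)) / r : ℕ) : ℤ) ≤ L (t + p) := by
    intro t ht
    set D : ℕ := (q * (t + p)) / r with hDdef
    have hDr : D * r ≤ q * (t + p) := Nat.div_mul_le_self _ _
    have hmod : q * (t + p) < r * (D + 1) := by
      have h1 := Nat.div_add_mod (q * (t + p)) r
      have h2 : (q * (t + p)) % r < r := Nat.mod_lt _ (by omega)
      have e : r * (D + 1) = r * ((q * (t + p)) / r) + r := by rw [hDdef]; ring
      omega
    have hedge : ∀ t', T₃ ≤ t' → q * t' ≤ q * (t + p) → -((D : ℤ)) ≤ L t' := by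
      intro t' ht' hle
      have h1 : (r : ℤ) * (-(L t')) ≤ (q : ℤ) * t' := hT₃ t' ht'
      have h2 : ((q * t' : ℕ) : ℤ) ≤ ((q * (t + p) : ℕ) : ℤ) := by exact_mod_cast hle
      have h3 : ((q * (t + p) : ℕ) : ℤ) < ((r * (D + 1) : ℕ) : ℤ) := by exact_mod_cast hmod
      push_cast at h2 h3
      have h4 : (r : ℤ) * (-(L t')) < (r : ℤ) * ((D : ℤ) + 1) := by
        calc (r : ℤ) * (-(L t')) ≤ (q : ℤ) * t' := h1
          _ ≤ (q : ℤ) * (t + p) := h2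
          _ < (r : ℤ) * ((D : ℤ) + 1) := h3
      have h5 : -(L t') < (D : ℤ) + 1 := by
        have hrz : (0 : ℤ) < (r : ℤ) := by exact_mod_cast hr
        exact lt_of_mul_lt_mul_left h4 (le_of_lt hrz)
      omega
    refine ⟨?_, ?_, ?_⟩
    · -- staircase application
      have hstep : t₀ + (J₁ + D + 1) * h ≤ t := by
        have hDrz : ((D * r : ℕ) : ℤ) ≤ ((q * (t + p) : ℕ) : ℤ) := by exact_mod_cast hDr
        have h2 : ((r * (p + t₀ + h * J₁ + h) : ℕ) : ℤ) ≤ (t : ℤ) := by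
          exact_mod_cast le_trans (le_max_right _ _) ht
        have hq' : ((h * q + 1 : ℕ) : ℤ) ≤ (r : ℤ) := by exact_mod_cast hqr
        push_cast at hDrz h2 hq'
        have key : (r : ℤ) * ((t₀ : ℤ) + ((J₁ : ℤ) + D + 1) * h) ≤ (r : ℤ) * t := by
          have c1 : (h : ℤ) * ((D : ℤ) * r) ≤ (h : ℤ) * ((q : ℤ) * (t + p)) := by
            apply mul_le_mul_of_nonneg_left hDrz (by positivity)
          have c2 : ((h : ℤ) * q) * ((t : ℤ) + p) ≤ ((r : ℤ) - 1) * ((t : ℤ) + p) := by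
            apply mul_le_mul_of_nonneg_right (by linarith) (by positivity)
          nlinarith [c1, c2, h2]
        have hrz : (0 : ℤ) < (r : ℤ) := by exact_mod_cast hr
        have := le_of_mul_le_mul_left key hrz
        exact_mod_cast this
      intro i hi1 hi2
      have := hstair (J₁ + D + 1) t hstep i ?_ hi2
      · exact this
      · push_cast at hi1 ⊢
        omega
    · exact hedge t (le_trans (le_max_left _ _) (le_trans (le_max_left _ _) ht))
        (Nat.mul_le_mul_left q (by omega))
    · exact hedge (t + p) (by
        have := le_trans (le_max_left _ _) (le_trans (le_max_left _ _) ht); omega)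
        (le_refl _)
  -- the truncated left edge is p-periodic from T₄ on
  have hMt : ∀ t, T₄ ≤ t → min (L (t + p)) ((P : ℤ) + 1) = min (L t) ((P : ℤ) + 1) := by
    intro t ht
    obtain ⟨hag, hb1, hb2⟩ := hAg t ht
    by_cases h1 : L t ≤ (P : ℤ)
    · have hne1 : F^[t + p] x (L t) ≠ 0 := by
        rw [← hag (L t) (by omega) h1]
        exact lbound_mem (hnum t)
      have e1 : L (t + p) ≤ L t := lbound_le (hnum (t + p)) hne1
      have h2 : L (t + p) ≤ (P : ℤ) := le_trans e1 h1
      have hne2 : F^[t] x (L (t + p)) ≠ 0 := by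
        rw [hag (L (t + p)) (by omega) h2]
        exact lbound_mem (hnum (t + p))
      have e2 : L t ≤ L (t + p) := lbound_le (hnum t) hne2
      omega
    · by_cases h2 : L (t + p) ≤ (P : ℤ)
      · have hne2 : F^[t] x (L (t + p)) ≠ 0 := by
          rw [hag (L (t + p)) (by omega) h2]
          exact lbound_mem (hnum (t + p))
        have e2 : L t ≤ L (t + p) := lbound_le (hnum t) hne2
        omega
      · omega
  -- hence the truncated left edge is bounded below on [T₄, ∞)
  have hMall : ∀ s : ℕ, min (L (T₄ + s)) ((P : ℤ) + 1) =
      min (L (T₄ + s % p)) ((P : ℤ) + 1) := by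
    intro s
    induction s using Nat.strong_induction_on with
    | _ s ih =>
      by_cases hsp' : s < p
      · rw [Nat.mod_eq_of_lt hsp']
      · have hs2 : s - p < s := by omega
        have e1 : T₄ + s = (T₄ + (s - p)) + p := by omega
        have e2 : s % p = (s - p) % p := by
          conv_lhs => rw [show s = (s - p) + p from by omega]
          rw [Nat.add_mod_right]
        rw [e1, hMt (T₄ + (s - p)) (by omega), ih (s - p) hs2, e2]
  -- contradiction with unbounded leftward spreading
  obtain ⟨B₀, hB₀⟩ : ∃ B₀ : ℤ, ∀ t, T₄ ≤ t → B₀ ≤ min (L t) ((P : ℤ) + 1) := by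
    refine ⟨(Finset.range p).inf' (by simp; omega) (fun j => min (L (T₄ + j)) ((P : ℤ) + 1)), ?_⟩
    intro t ht
    have := hMall (t - T₄)
    rw [show T₄ + (t - T₄) = t from by omega] at this
    rw [this]
    exact Finset.inf'_le _ (Finset.mem_range.2 (Nat.mod_lt _ (by omega)))
  obtain ⟨t, ht1, ht2⟩ := L_tail_unbounded hf hsp hx T₄ B₀
  have hble := hB₀ t ht1
  have hmin := min_le_left (L t) ((P : ℤ) + 1)
  have ht2' : L t < B₀ := ht2
  omega
end

section
/- The fractional multiplication automaton Mul_{p/q,pq} (p > q > 1 coprime) is left spreading on number-like configurations with spreading speed log_{pq}(p/q). In particular, for every number-like x, limsup_{t→∞} (-lbound(Mul_{p/q,pq}^t(x)))/t ≤ log_{pq}(p/q), with equality attained in the supremum over number-like x. -/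
/-- The left edge of a configuration over `{0,...,m-1}`. -/
noncomputable def lboundF {m : ℕ} (x : ℤ → Fin m) : ℤ :=
  sInf {N : ℤ | (x N : ℕ) ≠ 0}

/-- `F` is left spreading on number-like configurations over `{0,...,m-1}`. -/
def LeftSpreadingF {m : ℕ} (F : (ℤ → Fin m) → ℤ → Fin m) : Prop :=
  (∀ x : ℤ → Fin m, (∀ i, (x i : ℕ) = 0) → ∀ i, (F x i : ℕ) = 0) ∧
    ∀ x, NumberLikeF x → ∃ t : ℕ, 1 ≤ t ∧ lboundF (F^[t] x) < lboundF x

/-- The spreading speed of `F`: `sup` over number-like `x` of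
`limsup_t (-lbound(F^t(x)))/t`. -/
noncomputable def spreadingSpeedF {m : ℕ} (F : (ℤ → Fin m) → ℤ → Fin m) : ℝ :=
  ⨆ x : {x : ℤ → Fin m // NumberLikeF x},
    Filter.limsup (fun t : ℕ => -((lboundF (F^[t] x.1) : ℝ)) / (t : ℝ)) Filter.atTop

open Filter Real

namespace Stmt16



lemma hasSum_shift {f : ℤ → ℝ} {N : ℤ} (h0 : ∀ i < N, f i = 0) {a : ℝ} :
    HasSum (fun k : ℕ => f (N + k)) a ↔ HasSum f a := by
  have hinj : Function.Injective (fun k : ℕ => N + (k : ℤ)) := by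
    intro a b h; simpa using h
  exact hinj.hasSum_iff (fun i hi => h0 i (by
    by_contra h
    push_neg at h
    exact hi ⟨(i - N).toNat, by simp; omega⟩))

lemma summable_shift {f : ℤ → ℝ} {N : ℤ} (h0 : ∀ i < N, f i = 0)
    (h : Summable fun k : ℕ => f (N + (k : ℤ))) : Summable f :=
  ((hasSum_shift h0).1 h.hasSum).summable

lemma tsum_shift {f : ℤ → ℝ} {N : ℤ} (h0 : ∀ i < N, f i = 0)
    (h : Summable fun k : ℕ => f (N + (k : ℤ))) :
    ∑' i, f i = ∑' k : ℕ, f (N + k) :=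
  ((hasSum_shift h0).1 h.hasSum).tsum_eq

lemma zpow_split {n : ℝ} (hn : 0 < n) (N : ℤ) (k : ℕ) :
    n ^ (-(N + (k : ℤ)) - 1) = n ^ (-N - 1) * (n⁻¹) ^ k := by
  rw [inv_pow, ← zpow_natCast n k, ← zpow_neg, ← zpow_add₀ (ne_of_gt hn)]
  congr 1; ring

lemma summable_shifted_bounded (n : ℕ) (hn : 1 < n) (f : ℤ → ℝ) (C : ℝ)
    (h0 : ∀ i, 0 ≤ f i) (hC : ∀ i, f i ≤ C) (N : ℤ) :
    Summable (fun k : ℕ => f (N + (k : ℤ)) * (n : ℝ) ^ (-(N + (k : ℤ)) - 1)) := by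
  have hnpos : (0 : ℝ) < n := by positivity
  have hn1 : (1 : ℝ) < n := by exact_mod_cast hn
  have hinv : (n : ℝ)⁻¹ < 1 := inv_lt_one_of_one_lt₀ hn1
  refine Summable.of_nonneg_of_le (fun k => mul_nonneg (h0 _) (by positivity))
    (f := fun k : ℕ => (C * (n : ℝ) ^ (-N - 1)) * ((n : ℝ)⁻¹) ^ k) (fun k => ?_)
    ((summable_geometric_of_lt_one (by positivity) hinv).mul_left _)
  · 
    rw [zpow_split hnpos]
    have h1 : (0:ℝ) ≤ ((n : ℝ)⁻¹) ^ k := by positivity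
    have h2 : (0:ℝ) ≤ (n : ℝ) ^ (-N - 1) := by positivity
    calc f (N + (k:ℤ)) * ((n:ℝ) ^ (-N-1) * ((n:ℝ)⁻¹) ^ k)
        ≤ C * ((n:ℝ) ^ (-N-1) * ((n:ℝ)⁻¹) ^ k) :=
          mul_le_mul_of_nonneg_right (hC _) (by positivity)
      _ = (C * (n:ℝ) ^ (-N-1)) * ((n:ℝ)⁻¹) ^ k := by ring

lemma summable_bounded (n : ℕ) (hn : 1 < n) (f : ℤ → ℝ) (C : ℝ)
    (h0 : ∀ i, 0 ≤ f i) (hC : ∀ i, f i ≤ C) {N : ℤ} (hN : ∀ i < N, f i = 0) :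
    Summable (fun i : ℤ => f i * (n : ℝ) ^ (-i - 1)) :=
  summable_shift (fun i hi => by rw [hN i hi, zero_mul])
    (summable_shifted_bounded n hn f C h0 hC N)


variable {m : ℕ}

noncomputable def tm (n : ℕ) (x : ℤ → Fin m) (i : ℤ) : ℝ :=
  ((x i : ℕ) : ℝ) * (n : ℝ) ^ (-i - 1)

lemma tm_nonneg (n : ℕ) (x : ℤ → Fin m) (i : ℤ) : 0 ≤ tm n x i := by
  unfold tm; positivity

lemma realN_eq (n : ℕ) (x : ℤ → Fin m) : realN n x = ∑' i, tm n x i := rfl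

lemma digit_le (n : ℕ) (x : ℤ → Fin m) (hm : m ≤ n) (i : ℤ) : ((x i : ℕ) : ℝ) ≤ n := by
  have := (x i).2
  exact_mod_cast (le_of_lt (lt_of_lt_of_le this hm))

lemma summable_tm (n : ℕ) (hn : 1 < n) (x : ℤ → Fin m) (hm : m ≤ n) {N : ℤ}
    (hN : ∀ i < N, (x i : ℕ) = 0) : Summable (tm n x) := by
  have : Summable (fun i : ℤ => ((x i : ℕ) : ℝ) * (n : ℝ) ^ (-i - 1)) :=
    summable_bounded n hn _ n (fun i => by positivity) (digit_le n x hm)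
      (fun i hi => by rw [hN i hi]; simp)
  exact this

lemma realN_le (n : ℕ) (hn : 1 < n) (x : ℤ → Fin m) (hm : m ≤ n) {N : ℤ}
    (hN : ∀ i < N, (x i : ℕ) = 0) : realN n x ≤ (n : ℝ) ^ (-N) := by
  have hnpos : (0 : ℝ) < n := by positivity
  have hn1 : (1 : ℝ) < n := by exact_mod_cast hn
  have hinv : (n : ℝ)⁻¹ < 1 := inv_lt_one_of_one_lt₀ hn1
  have h0 : ∀ i < N, tm n x i = 0 := fun i hi => by simp [tm, hN i hi]
  have hshift : Summable (fun k : ℕ => tm n x (N + k)) := by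
    have := summable_shifted_bounded n hn (fun i => ((x i : ℕ) : ℝ)) n
      (fun i => by positivity) (digit_le n x hm) N
    exact this
  rw [realN_eq, tsum_shift h0 hshift]
  have hgeom : Summable (fun k : ℕ => (((n : ℝ) - 1) * (n : ℝ) ^ (-N - 1)) * ((n : ℝ)⁻¹) ^ k) :=
    (summable_geometric_of_lt_one (by positivity) hinv).mul_left _
  have hb : ∀ k : ℕ, tm n x (N + k) ≤ (((n : ℝ) - 1) * (n : ℝ) ^ (-N - 1)) * ((n : ℝ)⁻¹) ^ k := by
    intro k
    have hd : ((x (N + (k : ℤ)) : ℕ) : ℝ) ≤ (n : ℝ) - 1 := by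
      have h := (x (N + (k : ℤ))).2
      have : ((x (N + (k : ℤ)) : ℕ) : ℝ) + 1 ≤ (m : ℝ) := by exact_mod_cast Nat.succ_le_of_lt h
      have hmn : (m : ℝ) ≤ (n : ℝ) := by exact_mod_cast hm
      linarith
    unfold tm
    rw [zpow_split hnpos]
    calc ((x (N + (k : ℤ)) : ℕ) : ℝ) * ((n : ℝ) ^ (-N - 1) * ((n : ℝ)⁻¹) ^ k)
        ≤ ((n : ℝ) - 1) * ((n : ℝ) ^ (-N - 1) * ((n : ℝ)⁻¹) ^ k) :=
          mul_le_mul_of_nonneg_right hd (by positivity)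
      _ = (((n : ℝ) - 1) * (n : ℝ) ^ (-N - 1)) * ((n : ℝ)⁻¹) ^ k := by ring
  calc ∑' k : ℕ, tm n x (N + k)
      ≤ ∑' k : ℕ, (((n : ℝ) - 1) * (n : ℝ) ^ (-N - 1)) * ((n : ℝ)⁻¹) ^ k :=
        Summable.tsum_le_tsum hb hshift hgeom
    _ = (((n : ℝ) - 1) * (n : ℝ) ^ (-N - 1)) * (1 - (n : ℝ)⁻¹)⁻¹ := by
        rw [tsum_mul_left, tsum_geometric_of_lt_one (by positivity) hinv]
    _ = (n : ℝ) ^ (-N) := by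
        have h2 : (n : ℝ) ^ (-N) = (n : ℝ) ^ (-N - 1) * n := by
          rw [← zpow_add_one₀ (ne_of_gt hnpos)]; congr 1; ring
        rw [h2]
        have hne : (n : ℝ) - 1 ≠ 0 := by linarith
        have hne2 : (n : ℝ) ≠ 0 := ne_of_gt hnpos
        field_simp

lemma le_realN (n : ℕ) (hn : 1 < n) (x : ℤ → Fin m) (hm : m ≤ n) {N L : ℤ}
    (hN : ∀ i < N, (x i : ℕ) = 0) (hL : (x L : ℕ) ≠ 0) :
    (n : ℝ) ^ (-L - 1) ≤ realN n x := by
  have hsum := summable_tm n hn x hm hN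
  have h1 : tm n x L ≤ realN n x := Summable.le_tsum hsum L (fun j _ => tm_nonneg n x j)
  have h2 : (n : ℝ) ^ (-L - 1) ≤ tm n x L := by
    unfold tm
    have hone : (1 : ℝ) ≤ ((x L : ℕ) : ℝ) := by exact_mod_cast Nat.one_le_iff_ne_zero.2 hL
    nlinarith [(by positivity : (0 : ℝ) < (n : ℝ) ^ (-L - 1))]
  linarith

lemma realN_pos (n : ℕ) (hn : 1 < n) (x : ℤ → Fin m) (hm : m ≤ n) {N : ℤ}
    (hN : ∀ i < N, (x i : ℕ) = 0) {i0 : ℤ} (hi0 : (x i0 : ℕ) ≠ 0) : 0 < realN n x :=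
  lt_of_lt_of_le (by positivity : (0 : ℝ) < (n : ℝ) ^ (-i0 - 1)) (le_realN n hn x hm hN hi0)

lemma exists_ne_zero_of_realN_pos (n : ℕ) (x : ℤ → Fin m) (h : 0 < realN n x) :
    ∃ i, (x i : ℕ) ≠ 0 := by
  by_contra hc
  push_neg at hc
  have : realN n x = 0 := by simp [realN, hc]
  linarith

lemma lbound_facts {x : ℤ → Fin m} {N : ℤ} (hN : ∀ i < N, (x i : ℕ) = 0)
    (hex : ∃ i, (x i : ℕ) ≠ 0) :
    (∀ i < lboundF x, (x i : ℕ) = 0) ∧ (x (lboundF x) : ℕ) ≠ 0 := by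
  have hbdd : BddBelow {i : ℤ | (x i : ℕ) ≠ 0} := by
    refine ⟨N, fun i hi => ?_⟩
    by_contra h
    push_neg at h
    exact hi (hN i h)
  have hne : Set.Nonempty {i : ℤ | (x i : ℕ) ≠ 0} := hex
  have hmem := Int.csInf_mem hne hbdd
  refine ⟨fun i hi => ?_, hmem⟩
  by_contra h
  exact absurd (csInf_le hbdd h) (not_le.2 hi)

section CA

variable (p q : ℕ)

lemma mulP_val (hq : 0 < q) (hn : 0 < p * q) (x : ℤ → Fin (p * q)) (i : ℤ) :
    ((mulP p q hn x i : ℕ)) = (x i : ℕ) % q * p + (x (i + 1) : ℕ) / q := by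
  show ((x i : ℕ) % q * p + (x (i + 1) : ℕ) / q) % (p * q) = _
  apply Nat.mod_eq_of_lt
  have hmq : (x i : ℕ) % q + 1 ≤ q := Nat.succ_le_of_lt (Nat.mod_lt _ hq)
  have hdq : (x (i + 1) : ℕ) / q < p := (Nat.div_lt_iff_lt_mul hq).2 (by
    have := (x (i + 1)).2
    omega)
  calc (x i : ℕ) % q * p + (x (i + 1) : ℕ) / q
      < (x i : ℕ) % q * p + p := by omega
    _ = ((x i : ℕ) % q + 1) * p := by ring
    _ ≤ q * p := Nat.mul_le_mul_right _ hmq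
    _ = p * q := Nat.mul_comm q p

lemma mulP_zero_left (hn : 0 < p * q) {x : ℤ → Fin (p * q)} {N : ℤ}
    (hN : ∀ i < N, (x i : ℕ) = 0) : ∀ i < N - 1, (mulP p q hn x i : ℕ) = 0 := by
  intro i hi
  show ((x i : ℕ) % q * p + (x (i + 1) : ℕ) / q) % (p * q) = 0
  rw [hN i (by omega), hN (i + 1) (by omega)]
  simp

lemma mulFrac_zero_left (hn : 0 < p * q) {x : ℤ → Fin (p * q)} {N : ℤ}
    (hN : ∀ i < N, (x i : ℕ) = 0) : ∀ i < N - 1, (mulFrac p q hn x i : ℕ) = 0 := by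
  intro i hi
  show (mulP p q hn (mulP p q hn x) (i - 1) : ℕ) = 0
  exact mulP_zero_left p q hn (mulP_zero_left p q hn hN) (i - 1) (by omega)

lemma one_lt_pq (hq : 1 < q) (hpq : q < p) : 1 < p * q := by
  have h2 : 2 * 2 ≤ p * q := Nat.mul_le_mul (by omega) (by omega)
  omega

lemma realN_mulP (hq : 1 < q) (hpq : q < p) (hn : 0 < p * q) (x : ℤ → Fin (p * q)) {N : ℤ}
    (hN : ∀ i < N, (x i : ℕ) = 0) :
    realN (p * q) (mulP p q hn x) = (p : ℝ) * realN (p * q) x := by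
  have h1n : 1 < p * q := one_lt_pq p q hq hpq
  have hq0 : 0 < q := by omega
  have hnR : (1 : ℝ) < ((p * q : ℕ) : ℝ) := by exact_mod_cast h1n
  have hnpos : (0 : ℝ) < ((p * q : ℕ) : ℝ) := by linarith
  set n : ℝ := ((p * q : ℕ) : ℝ) with hndef
  -- the two pieces
  set v : ℤ → ℝ := fun i => (((x i : ℕ) % q * p : ℕ) : ℝ) * n ^ (-i - 1) with hv
  set U : ℤ → ℝ := fun i => (((x i : ℕ) / q : ℕ) : ℝ) * n ^ (-i) with hU
  have hnsplit : ∀ i : ℤ, n ^ (-i) = n ^ (-i - 1) * n := by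
    intro i
    rw [← zpow_add_one₀ (ne_of_gt hnpos)]
    congr 1; ring
  -- summability
  have hsv : Summable v := by
    apply summable_bounded (p * q) h1n _ ((p * q : ℕ) : ℝ)
      (fun i => by positivity) _ (N := N) (fun i hi => by simp [hN i hi])
    intro i
    have : (x i : ℕ) % q * p ≤ p * q := by
      have := Nat.mod_lt (x i : ℕ) hq0
      calc (x i : ℕ) % q * p ≤ q * p := Nat.mul_le_mul_right _ (by omega)
        _ = p * q := Nat.mul_comm q p
    exact_mod_cast this
  have hsU' : Summable (fun i : ℤ => U (i + 1)) := by
    have : Summable (fun i : ℤ => (((x (i + 1) : ℕ) / q : ℕ) : ℝ) * n ^ (-i - 1)) := by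
      apply summable_bounded (p * q) h1n _ ((p * q : ℕ) : ℝ)
        (fun i => by positivity) _ (N := N - 1) (fun i hi => by
          rw [hN (i + 1) (by omega)]; simp)
      intro i
      have h := Nat.div_le_self (x (i + 1) : ℕ) q
      have h2 := (x (i + 1)).2
      have : (x (i + 1) : ℕ) / q ≤ p * q := by omega
      exact_mod_cast this
    apply this.congr
    intro i
    rw [hU]
    simp only
    congr 1
    congr 1
    ring
  have hsU : Summable U := ((Equiv.addRight (1 : ℤ)).summable_iff (f := U)).1 hsU'
  -- pointwise identities
  have key : ∀ i : ℤ, tm (p * q) (mulP p q hn x) i = v i + U (i + 1) := by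
    intro i
    simp only [tm, hv, hU, mulP_val p q hq0 hn x i, hndef]
    push_cast
    ring
  have key2 : ∀ i : ℤ, (p : ℝ) * tm (p * q) x i = v i + U i := by
    intro i
    simp only [tm, hv, hU]
    rw [hnsplit i]
    have hdm : ((x i : ℕ) : ℝ)
        = (q : ℝ) * (((x i : ℕ) / q : ℕ) : ℝ) + (((x i : ℕ) % q : ℕ) : ℝ) := by
      exact_mod_cast (Nat.div_add_mod (x i : ℕ) q).symm
    rw [hdm]
    simp only [hndef]
    push_cast
    ring
  -- combine
  calc realN (p * q) (mulP p q hn x)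
      = ∑' i, (v i + U (i + 1)) := by rw [realN_eq]; exact tsum_congr key
    _ = (∑' i, v i) + ∑' i, U (i + 1) := Summable.tsum_add hsv hsU'
    _ = (∑' i, v i) + ∑' i, U i := by
        congr 1
        exact (Equiv.addRight (1 : ℤ)).tsum_eq U
    _ = ∑' i, (v i + U i) := (Summable.tsum_add hsv hsU).symm
    _ = ∑' i, (p : ℝ) * tm (p * q) x i := tsum_congr (fun i => (key2 i).symm)
    _ = (p : ℝ) * realN (p * q) x := by rw [tsum_mul_left, realN_eq]

lemma realN_shift (n : ℕ) (hn : 1 < n) (y : ℤ → Fin m) :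
    realN n (fun i => y (i - 1)) = ((n : ℝ))⁻¹ * realN n y := by
  have hnpos : (0 : ℝ) < n := by positivity
  rw [realN_eq, realN_eq, ← tsum_mul_left,
    ← (Equiv.addRight (1 : ℤ)).tsum_eq (tm n (fun i => y (i - 1)))]
  apply tsum_congr
  intro j
  simp only [tm, Equiv.coe_addRight, add_sub_cancel_right]
  rw [show (-(j + 1) - 1 : ℤ) = (-j - 1) + (-1) by ring,
    zpow_add₀ (ne_of_gt hnpos), zpow_neg_one]
  ring

lemma realN_mulFrac (hq : 1 < q) (hpq : q < p) (hn : 0 < p * q) (x : ℤ → Fin (p * q)) {N : ℤ}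
    (hN : ∀ i < N, (x i : ℕ) = 0) :
    realN (p * q) (mulFrac p q hn x) = ((p : ℝ) / (q : ℝ)) * realN (p * q) x := by
  have h1n : 1 < p * q := one_lt_pq p q hq hpq
  have h1 := realN_mulP p q hq hpq hn x hN
  have h2 := realN_mulP p q hq hpq hn (mulP p q hn x) (mulP_zero_left p q hn hN)
  have heq : mulFrac p q hn x = fun i => (mulP p q hn (mulP p q hn x)) (i - 1) := rfl
  rw [heq, realN_shift (p * q) h1n _, h2, h1]
  have hq0 : (0 : ℝ) < (q : ℝ) := by exact_mod_cast (by omega : 0 < q)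
  have hp0 : (0 : ℝ) < (p : ℝ) := by exact_mod_cast (by omega : 0 < p)
  push_cast
  field_simp

lemma iterate_facts (hq : 1 < q) (hpq : q < p) (hn : 0 < p * q) (x : ℤ → Fin (p * q)) {N : ℤ}
    (hN : ∀ i < N, (x i : ℕ) = 0) (t : ℕ) :
    (∀ i < N - t, (((mulFrac p q hn)^[t] x) i : ℕ) = 0) ∧
      realN (p * q) ((mulFrac p q hn)^[t] x)
        = ((p : ℝ) / (q : ℝ)) ^ t * realN (p * q) x := by
  induction t with
  | zero => simpa using hN
  | succ t ih =>
    rw [Function.iterate_succ_apply']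
    refine ⟨fun i hi => mulFrac_zero_left p q hn ih.1 i (by push_cast at hi ⊢; omega), ?_⟩
    rw [realN_mulFrac p q hq hpq hn _ ih.1, ih.2]
    ring

end CA

lemma logb_zpow_self {n : ℝ} (hn : 1 < n) (z : ℤ) : Real.logb n (n ^ z) = z := by
  rw [Real.logb, Real.log_zpow, mul_div_assoc, div_self (ne_of_gt (Real.log_pos hn)), mul_one]

lemma main_bounds (p q : ℕ) (hq : 1 < q) (hpq : q < p) (hn : 0 < p * q)
    (x : ℤ → Fin (p * q)) (hx : NumberLikeF x) :
    ∃ b : ℝ, ∀ t : ℕ,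
      ((t : ℝ) * Real.logb ((p * q : ℕ) : ℝ) ((p : ℝ) / (q : ℝ)) + b
        ≤ -((lboundF ((mulFrac p q hn)^[t] x) : ℝ))) ∧
      (-((lboundF ((mulFrac p q hn)^[t] x) : ℝ))
        ≤ (t : ℝ) * Real.logb ((p * q : ℕ) : ℝ) ((p : ℝ) / (q : ℝ)) + b + 1) := by
  obtain ⟨⟨i0, hi0⟩, N, hN⟩ := hx
  have h1n : 1 < p * q := one_lt_pq p q hq hpq
  have hnR : (1 : ℝ) < ((p * q : ℕ) : ℝ) := by exact_mod_cast h1n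
  have hr : 0 < realN (p * q) x := realN_pos (p * q) h1n x le_rfl hN hi0
  refine ⟨Real.logb ((p * q : ℕ) : ℝ) (realN (p * q) x), fun t => ?_⟩
  set y := (mulFrac p q hn)^[t] x with hy
  obtain ⟨hz, hval⟩ := iterate_facts p q hq hpq hn x hN t
  have hpq0 : (0 : ℝ) < (p : ℝ) / (q : ℝ) := by
    apply div_pos <;> exact_mod_cast (by omega : (0:ℕ) < _)
  have hrt : 0 < realN (p * q) y := by rw [← hy] at hval; rw [hval]; positivity
  have hex : ∃ i, (y i : ℕ) ≠ 0 := exists_ne_zero_of_realN_pos _ _ hrt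
  rw [← hy] at hz
  obtain ⟨hzero, hnz⟩ := lbound_facts hz hex
  set L := lboundF y with hL
  have hub : realN (p * q) y ≤ ((p * q : ℕ) : ℝ) ^ (-L) := realN_le (p * q) h1n y le_rfl hzero
  have hlb : ((p * q : ℕ) : ℝ) ^ (-L - 1) ≤ realN (p * q) y :=
    le_realN (p * q) h1n y le_rfl hzero hnz
  have hlog : Real.logb ((p * q : ℕ) : ℝ) (realN (p * q) y)
      = (t : ℝ) * Real.logb ((p * q : ℕ) : ℝ) ((p : ℝ) / (q : ℝ))
        + Real.logb ((p * q : ℕ) : ℝ) (realN (p * q) x) := by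
    rw [hval, Real.logb_mul (by positivity) (ne_of_gt hr), Real.logb_pow]
  constructor
  · have h1 : Real.logb ((p * q : ℕ) : ℝ) (realN (p * q) y)
        ≤ Real.logb ((p * q : ℕ) : ℝ) (((p * q : ℕ) : ℝ) ^ (-L)) :=
      Real.logb_le_logb_of_le hnR hrt hub
    rw [hlog, logb_zpow_self hnR] at h1
    push_cast at h1 ⊢
    linarith
  · have h2 : Real.logb ((p * q : ℕ) : ℝ) (((p * q : ℕ) : ℝ) ^ (-L - 1))
        ≤ Real.logb ((p * q : ℕ) : ℝ) (realN (p * q) y) :=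
      Real.logb_le_logb_of_le hnR (by positivity) hlb
    rw [hlog, logb_zpow_self hnR] at h2
    push_cast at h2 ⊢
    linarith

lemma tendsto_lbound (p q : ℕ) (hq : 1 < q) (hpq : q < p) (hn : 0 < p * q)
    (x : ℤ → Fin (p * q)) (hx : NumberLikeF x) :
    Filter.Tendsto (fun t : ℕ => -((lboundF ((mulFrac p q hn)^[t] x) : ℝ)) / (t : ℝ))
      Filter.atTop
      (nhds (Real.logb ((p * q : ℕ) : ℝ) ((p : ℝ) / (q : ℝ)))) := by
  obtain ⟨b, hb⟩ := main_bounds p q hq hpq hn x hx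
  set c := Real.logb ((p * q : ℕ) : ℝ) ((p : ℝ) / (q : ℝ)) with hc
  have htl : Filter.Tendsto (fun t : ℕ => c + b / (t : ℝ)) Filter.atTop (nhds c) := by
    have := Filter.Tendsto.div_atTop (tendsto_const_nhds (x := b) (f := Filter.atTop (α := ℕ)))
      tendsto_natCast_atTop_atTop
    simpa using (tendsto_const_nhds (x := c) (f := Filter.atTop (α := ℕ))).add this
  have htu : Filter.Tendsto (fun t : ℕ => c + (b + 1) / (t : ℝ)) Filter.atTop (nhds c) := by
    have := Filter.Tendsto.div_atTop (tendsto_const_nhds (x := b + 1) (f := Filter.atTop (α := ℕ)))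
      tendsto_natCast_atTop_atTop
    simpa using (tendsto_const_nhds (x := c) (f := Filter.atTop (α := ℕ))).add this
  apply tendsto_of_tendsto_of_tendsto_of_le_of_le' htl htu
  · filter_upwards [Filter.eventually_ge_atTop 1] with t ht
    have htpos : (0 : ℝ) < (t : ℝ) := by exact_mod_cast ht
    rw [show c + b / (t : ℝ) = ((t : ℝ) * c + b) / t by field_simp]
    exact div_le_div_of_nonneg_right ((hb t).1) htpos.le |>.trans_eq rfl
  · filter_upwards [Filter.eventually_ge_atTop 1] with t ht
    have htpos : (0 : ℝ) < (t : ℝ) := by exact_mod_cast ht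
    rw [show c + (b + 1) / (t : ℝ) = ((t : ℝ) * c + b + 1) / t by field_simp; ring]
    exact div_le_div_of_nonneg_right ((hb t).2) htpos.le |>.trans_eq rfl

end Stmt16

/-- The fractional multiplication automaton `Mul_{p/q,pq}` (`p > q > 1` coprime) is left
spreading on number-like configurations with spreading speed `log_{pq}(p/q)`; in
particular every number-like `x` has `limsup_t (-lbound(Mul_{p/q,pq}^t(x)))/t ≤
log_{pq}(p/q)`, and equality is attained in the supremum over number-like `x`. -/
theorem stmt_16 (p q : ℕ) (hq : 1 < q) (hpq : q < p) (hco : Nat.Coprime p q)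
    (hn : 0 < p * q) :
    LeftSpreadingF (mulFrac p q hn) ∧
    (∀ x : ℤ → Fin (p * q), NumberLikeF x →
      Filter.limsup
        (fun t : ℕ => -((lboundF ((mulFrac p q hn)^[t] x) : ℝ)) / (t : ℝ)) Filter.atTop
        ≤ Real.logb ((p * q : ℕ) : ℝ) ((p : ℝ) / (q : ℝ))) ∧
    spreadingSpeedF (mulFrac p q hn) = Real.logb ((p * q : ℕ) : ℝ) ((p : ℝ) / (q : ℝ)) := by
  have h1n : 1 < p * q := Stmt16.one_lt_pq p q hq hpq
  set c := Real.logb ((p * q : ℕ) : ℝ) ((p : ℝ) / (q : ℝ)) with hc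
  have hq0R : (0 : ℝ) < (q : ℝ) := by exact_mod_cast (by omega : 0 < q)
  have hcpos : 0 < c := by
    apply Real.logb_pos (by exact_mod_cast h1n)
    rw [lt_div_iff₀ hq0R]
    exact_mod_cast (by omega : 1 * q < p)
  have hlim : ∀ x : ℤ → Fin (p * q), NumberLikeF x →
      Filter.limsup
        (fun t : ℕ => -((lboundF ((mulFrac p q hn)^[t] x) : ℝ)) / (t : ℝ)) Filter.atTop = c :=
    fun x hx => (Stmt16.tendsto_lbound p q hq hpq hn x hx).limsup_eq
  refine ⟨⟨?_, ?_⟩, fun x hx => le_of_eq (hlim x hx), ?_⟩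
  · intro x hx i
    simp [mulFrac, mulP, mulRule, hx]
  · intro x hx
    obtain ⟨b, hb⟩ := Stmt16.main_bounds p q hq hpq hn x hx
    refine ⟨⌈1 / c⌉₊ + 1, by omega, ?_⟩
    set t : ℕ := ⌈1 / c⌉₊ + 1 with ht
    have h0 := (hb 0).2
    have ht1 := (hb t).1
    have htc : (1 : ℝ) < (t : ℝ) * c := by
      have h1 : (1 / c) ≤ (⌈1 / c⌉₊ : ℝ) := Nat.le_ceil _
      have h2 : (t : ℝ) = (⌈1 / c⌉₊ : ℝ) + 1 := by rw [ht]; push_cast; ring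
      rw [h2]
      calc (1 : ℝ) = (1 / c) * c := by field_simp
        _ < ((⌈1 / c⌉₊ : ℝ) + 1) * c := by nlinarith
    rw [← hc] at ht1 h0
    have hlt : ((lboundF ((mulFrac p q hn)^[t] x)) : ℝ)
        < ((lboundF ((mulFrac p q hn)^[0] x)) : ℝ) := by
      simp only [Nat.cast_zero, zero_mul, zero_add] at h0
      linarith
    have hlt2 : lboundF ((mulFrac p q hn)^[t] x) < lboundF ((mulFrac p q hn)^[0] x) := by
      exact_mod_cast hlt
    simpa using hlt2
  · have hne : Nonempty {x : ℤ → Fin (p * q) // NumberLikeF x} := by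
      refine ⟨⟨fun i => if i = 0 then ⟨1, h1n⟩ else ⟨0, hn⟩, ⟨0, by simp⟩,
        0, fun i hi => ?_⟩⟩
      simp [show ¬(i = 0) by omega]
    rw [spreadingSpeedF,
      iSup_congr (fun x : {x : ℤ → Fin (p * q) // NumberLikeF x} => hlim x.1 x.2)]
    exact ciSup_const
end

section
/- Morse–Hedlund theorem (one-sided version): if a one-sided sequence x ∈ A^N over a finite alphabet A is not eventually periodic, then for every n ≥ 1 the number of distinct factors (subwords) of length n occurring in x is at least n + 1. -/
section Aux

variable {A : Type*} [Fintype A] (x : ℕ → A)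

/-- The window of length `n` at position `i`. -/
def MHwin (n i : ℕ) : Fin n → A := fun k => x (i + k.val)

lemma MH_image (n : ℕ) :
    (fun (w : Fin (n+1) → A) => w ∘ Fin.castSucc) '' (Set.range (MHwin x (n+1)))
      = Set.range (MHwin x n) := by
  ext w
  constructor
  · rintro ⟨v, ⟨i, rfl⟩, rfl⟩
    exact ⟨i, by funext k; simp [MHwin]⟩
  · rintro ⟨i, rfl⟩
    exact ⟨MHwin x (n+1) i, ⟨i, rfl⟩, by funext k; simp [MHwin]⟩

lemma MH_mono (n : ℕ) :
    (Set.range (MHwin x n)).ncard ≤ (Set.range (MHwin x (n+1))).ncard := by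
  rw [← MH_image x n]
  exact Set.ncard_image_le (Set.toFinite _)

/-- If the complexity does not grow from `n` to `n+1`, the sequence is eventually periodic. -/
lemma MH_key (n : ℕ)
    (h : (Set.range (MHwin x (n+1))).ncard ≤ (Set.range (MHwin x n)).ncard) :
    EvPeriodicSeq x := by
  have hcard : ((fun (w : Fin (n+1) → A) => w ∘ Fin.castSucc) ''
      Set.range (MHwin x (n+1))).ncard = (Set.range (MHwin x (n+1))).ncard := by
    rw [MH_image x n]
    exact le_antisymm (MH_mono x n) h
  have hinj := Set.injOn_of_ncard_image_eq hcard (Set.toFinite _)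
  -- step: if windows of length n+1 agree at i, j, they agree at i+1, j+1
  have step : ∀ i j : ℕ, MHwin x (n+1) i = MHwin x (n+1) j →
      MHwin x (n+1) (i+1) = MHwin x (n+1) (j+1) := by
    intro i j hij
    have hpi : MHwin x (n+1) (i+1) ∘ Fin.castSucc = MHwin x (n+1) (j+1) ∘ Fin.castSucc := by
      funext k
      have h1 := congrFun hij k.succ
      simp only [MHwin, Fin.val_succ] at h1
      simp only [MHwin, Function.comp_apply, Fin.coe_castSucc]
      have e1 : i + 1 + k.val = i + (k.val + 1) := by omega
      have e2 : j + 1 + k.val = j + (k.val + 1) := by omega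
      rw [e1, e2, h1]
    exact hinj ⟨i+1, rfl⟩ ⟨j+1, rfl⟩ hpi
  -- pigeonhole
  obtain ⟨i, j, hne, heq⟩ :=
    Finite.exists_ne_map_eq_of_infinite (MHwin x (n+1))
  -- wlog i < j
  rcases lt_or_gt_of_ne hne with hlt | hlt
  · refine ⟨j - i, by omega, i, ?_⟩
    have hall : ∀ t, MHwin x (n+1) (i + t) = MHwin x (n+1) (j + t) := by
      intro t
      induction t with
      | zero => simpa using heq
      | succ t ih =>
        have := step _ _ ih
        simpa [Nat.add_assoc] using this
    intro t ht
    obtain ⟨s, rfl⟩ := Nat.exists_eq_add_of_le ht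
    have hv := congrFun (hall s) ⟨0, Nat.succ_pos n⟩
    simp only [MHwin, Nat.add_zero] at hv
    have e : i + s + (j - i) = j + s := by omega
    rw [e]
    exact hv.symm
  · refine ⟨i - j, by omega, j, ?_⟩
    have hall : ∀ t, MHwin x (n+1) (j + t) = MHwin x (n+1) (i + t) := by
      intro t
      induction t with
      | zero => simpa using heq.symm
      | succ t ih =>
        have := step _ _ ih
        simpa [Nat.add_assoc] using this
    intro t ht
    obtain ⟨s, rfl⟩ := Nat.exists_eq_add_of_le ht
    have hv := congrFun (hall s) ⟨0, Nat.succ_pos n⟩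
    simp only [MHwin, Nat.add_zero] at hv
    have e : j + s + (i - j) = i + s := by omega
    rw [e]
    exact hv.symm

lemma MH_main (hx : ¬ EvPeriodicSeq x) :
    ∀ m : ℕ, m + 2 ≤ (Set.range (MHwin x (m+1))).ncard := by
  intro m
  induction m with
  | zero =>
    by_contra hc
    push_neg at hc
    apply hx
    apply MH_key x 0
    have h0 : (Set.range (MHwin x 0)).ncard = 1 := by
      rw [Set.ncard_eq_one]
      exact ⟨MHwin x 0 0, by
        ext w
        simp only [Set.mem_range, Set.mem_singleton_iff]
        constructor
        · rintro ⟨i, rfl⟩; funext k; exact absurd k.isLt (Nat.not_lt_zero _)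
        · rintro rfl; exact ⟨0, rfl⟩⟩
    omega
  | succ m ih =>
    by_contra hc
    push_neg at hc
    apply hx
    apply MH_key x (m+1)
    omega

end Aux

/-- Morse–Hedlund theorem (one-sided version): if `x ∈ A^ℕ` over a finite alphabet is
not eventually periodic, then for every `n ≥ 1` at least `n + 1` distinct words of
length `n` occur in `x`. -/
theorem stmt_18 {A : Type*} [Fintype A] (x : ℕ → A) (hx : ¬ EvPeriodicSeq x)
    (n : ℕ) (hn : 1 ≤ n) :
    n + 1 ≤ (Set.range fun i : ℕ => fun k : Fin n => x (i + k.val)).ncard := by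
  cases n with
  | zero => omega
  | succ m => exact MH_main x hx m
end
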